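/- arXiv:1307.8291 — 4 statements merged into one kernel-verified Lean document; each statement's English description precedes it below -/
import Mathlib

section
/- Let f : I ⊂ [0,∞) → ℝ be differentiable on I°, m ∈ (0,1], ma, b ∈ I° with a < b, and suppose f' is integrable on [ma, mb]. If |f'|^q is (α,m)-convex on [ma,b] for some fixed q ≥ 1 and (α,m) ∈ [0,1]² (with m > 0), then for every x ∈ [a,b], λ ∈ [0,1] and θ > 0: |S_f(mx,λ,θ,ma,mb)| ≤ (m^θ A₁(θ,λ)^{1−1/q}/(b−a)) { (x−a)^{θ+1} (|f'(mx)|^q A₂(α,θ,λ) + m |f'(a)|^q A₃(α,θ,λ))^{1/q} + (b−x)^{θ+1} (|f'(mx)|^q A₂(α,θ,λ) + m |f'(b)|^q A₃(α,θ,λ))^{1/q} }. -/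
open MeasureTheory Set intervalIntegral Real

/-- Riemann-Liouville fractional integral `J_{d^-}^θ f(c) = (1/Γ(θ)) ∫_c^d (t-c)^(θ-1) f(t) dt`. -/
noncomputable def rlLeft (θ c d : ℝ) (f : ℝ → ℝ) : ℝ :=
  (1 / Real.Gamma θ) * ∫ t in c..d, (t - c) ^ (θ - 1) * f t

/-- Riemann-Liouville fractional integral `J_{c^+}^θ f(d) = (1/Γ(θ)) ∫_c^d (d-t)^(θ-1) f(t) dt`. -/
noncomputable def rlRight (θ c d : ℝ) (f : ℝ → ℝ) : ℝ :=
  (1 / Real.Gamma θ) * ∫ t in c..d, (d - t) ^ (θ - 1) * f t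

/-- The quantity `S_f(mx, λ, θ, ma, mb)` from the paper. -/
noncomputable def Sf (f : ℝ → ℝ) (m a b x lam θ : ℝ) : ℝ :=
  (1 - lam) * m ^ (θ - 1) * (((x - a) ^ θ + (b - x) ^ θ) / (b - a)) * f (m * x)
  + lam * m ^ (θ - 1) * (((x - a) ^ θ * f (m * a) + (b - x) ^ θ * f (m * b)) / (b - a))
  - Real.Gamma (θ + 1) / (m * (b - a)) *
      (rlLeft θ (m * a) (m * x) f + rlRight θ (m * x) (m * b) f)

/-- `(α,m)`-convexity of `g` on the interval `[c,d]`. -/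
def AlphaMConvexOn (α m c d : ℝ) (g : ℝ → ℝ) : Prop :=
  ∀ u ∈ Set.Icc c d, ∀ v ∈ Set.Icc c d, ∀ t ∈ Set.Icc (0:ℝ) 1,
    t * u + m * (1 - t) * v ∈ Set.Icc c d →
      g (t * u + m * (1 - t) * v) ≤ t ^ α * g u + m * (1 - t ^ α) * g v

noncomputable def A1 (θ lam : ℝ) : ℝ := (2 * θ * lam ^ (1 + 1 / θ) + 1) / (θ + 1) - lam

noncomputable def A2 (α θ lam : ℝ) : ℝ :=
  2 * θ * lam ^ (1 + (1 + α) / θ) / ((α + 1) * (α + θ + 1)) + 1 / (α + θ + 1) - lam / (α + 1)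

noncomputable def A3 (α θ lam : ℝ) : ℝ := A1 θ lam - A2 α θ lam


set_option maxHeartbeats 2000000

lemma cont_rpow {α : ℝ} (hα : 0 ≤ α) : Continuous fun s : ℝ => s ^ α :=
  continuous_iff_continuousAt.mpr fun x => Real.continuousAt_rpow_const x α (Or.inr hα)

lemma A2_zero (θ lam : ℝ) : A2 0 θ lam = A1 θ lam := by
  unfold A2 A1
  norm_num
  ring

lemma integral_A2 {θ lam α : ℝ} (hθ : 0 < θ) (hlam0 : 0 ≤ lam) (hlam1 : lam ≤ 1) (hα : 0 ≤ α) :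
    ∫ s in (0:ℝ)..1, |s ^ θ - lam| * s ^ α = A2 α θ lam := by
  set r := lam ^ (1/θ) with hrdef
  have hr0 : 0 ≤ r := Real.rpow_nonneg hlam0 _
  have hr1 : r ≤ 1 := Real.rpow_le_one hlam0 hlam1 (by positivity)
  have hrθ : r ^ θ = lam := by
    rw [hrdef, ← Real.rpow_mul hlam0, one_div, inv_mul_cancel₀ (ne_of_gt hθ), Real.rpow_one]
  have hcont : Continuous fun s : ℝ => |s ^ θ - lam| * s ^ α :=
    (((cont_rpow hθ.le).sub continuous_const).abs).mul (cont_rpow hα)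
  have hsplit : ∫ s in (0:ℝ)..1, |s ^ θ - lam| * s ^ α
      = (∫ s in (0:ℝ)..r, |s ^ θ - lam| * s ^ α) + ∫ s in r..1, |s ^ θ - lam| * s ^ α :=
    (intervalIntegral.integral_add_adjacent_intervals
      (hcont.intervalIntegrable _ _) (hcont.intervalIntegrable _ _)).symm
  have hθα : (0:ℝ) < θ + α := by linarith
  have hIα : IntervalIntegrable (fun s : ℝ => s ^ α) volume 0 r :=
    (cont_rpow hα).intervalIntegrable _ _
  have h1 : ∫ s in (0:ℝ)..r, |s ^ θ - lam| * s ^ α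
      = lam * (r ^ (α+1) - 0 ^ (α+1)) / (α+1) - (r ^ (θ+α+1) - 0 ^ (θ+α+1)) / (θ+α+1) := by
    rw [intervalIntegral.integral_congr (g := fun s => lam * s ^ α - s ^ (θ+α)) ?_]
    · rw [intervalIntegral.integral_sub (hIα.const_mul lam)
        ((cont_rpow hθα.le).intervalIntegrable _ _),
        intervalIntegral.integral_const_mul, integral_rpow (Or.inl (by linarith)),
        integral_rpow (Or.inl (by linarith))]
      ring_nf
    · intro s hs
      rw [uIcc_of_le hr0] at hs
      show |s ^ θ - lam| * s ^ α = lam * s ^ α - s ^ (θ+α)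
      have h1 : s ^ θ ≤ lam := by
        rw [← hrθ]; exact Real.rpow_le_rpow hs.1 hs.2 hθ.le
      rw [abs_of_nonpos (by linarith), Real.rpow_add' hs.1 (by positivity)]
      ring
  have h2 : ∫ s in r..1, |s ^ θ - lam| * s ^ α
      = ((1:ℝ) ^ (θ+α+1) - r ^ (θ+α+1)) / (θ+α+1) - lam * ((1:ℝ) ^ (α+1) - r ^ (α+1)) / (α+1) := by
    rw [intervalIntegral.integral_congr (g := fun s => s ^ (θ+α) - lam * s ^ α) ?_]
    · rw [intervalIntegral.integral_sub ((cont_rpow hθα.le).intervalIntegrable _ _)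
        (((cont_rpow hα).intervalIntegrable _ _).const_mul lam),
        intervalIntegral.integral_const_mul, integral_rpow (Or.inl (by linarith)),
        integral_rpow (Or.inl (by linarith))]
      ring_nf
    · intro s hs
      rw [uIcc_of_le hr1] at hs
      show |s ^ θ - lam| * s ^ α = s ^ (θ+α) - lam * s ^ α
      have hs0 : 0 ≤ s := le_trans hr0 hs.1
      have h1 : lam ≤ s ^ θ := by
        rw [← hrθ]; exact Real.rpow_le_rpow hr0 hs.1 hθ.le
      rw [abs_of_nonneg (by linarith), Real.rpow_add' hs0 (by positivity)]
      ring
  have hQ : lam * r ^ (α+1) = r ^ (θ+α+1) := by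
    rw [← hrθ, ← Real.rpow_add' hr0 (by positivity)]
    ring_nf
  have hL : lam ^ (1 + (1+α)/θ) = r ^ (θ+α+1) := by
    rw [hrdef, ← Real.rpow_mul hlam0]
    congr 1
    field_simp
    ring
  rw [hsplit, h1, h2, Real.zero_rpow (by positivity), Real.zero_rpow (by positivity),
    Real.one_rpow, Real.one_rpow]
  unfold A2
  rw [hL, ← hQ]
  have hα1 : α + 1 ≠ 0 := by positivity
  have hθα1 : θ + α + 1 ≠ 0 := by positivity
  have hαθ1 : α + θ + 1 ≠ 0 := by positivity
  field_simp
  ring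

lemma A2_nonneg {θ lam α : ℝ} (hθ : 0 < θ) (hlam0 : 0 ≤ lam) (hlam1 : lam ≤ 1) (hα : 0 ≤ α) :
    0 ≤ A2 α θ lam := by
  rw [← integral_A2 hθ hlam0 hlam1 hα]
  apply intervalIntegral.integral_nonneg zero_le_one
  intro s hs
  exact mul_nonneg (abs_nonneg _) (Real.rpow_nonneg hs.1 _)

lemma A1_nonneg {θ lam : ℝ} (hθ : 0 < θ) (hlam0 : 0 ≤ lam) (hlam1 : lam ≤ 1) :
    0 ≤ A1 θ lam := by
  rw [← A2_zero]; exact A2_nonneg hθ hlam0 hlam1 le_rfl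

lemma A3_nonneg {θ lam α : ℝ} (hθ : 0 < θ) (hlam0 : 0 ≤ lam) (hlam1 : lam ≤ 1)
    (hα : 0 ≤ α) : 0 ≤ A3 α θ lam := by
  have hc1 : Continuous fun s : ℝ => |s ^ θ - lam| * s ^ (0:ℝ) :=
    (((cont_rpow hθ.le).sub continuous_const).abs).mul (cont_rpow le_rfl)
  have hc2 : Continuous fun s : ℝ => |s ^ θ - lam| * s ^ α :=
    (((cont_rpow hθ.le).sub continuous_const).abs).mul (cont_rpow hα)
  rw [A3, ← A2_zero, ← integral_A2 hθ hlam0 hlam1 le_rfl, ← integral_A2 hθ hlam0 hlam1 hα,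
    ← intervalIntegral.integral_sub (hc1.intervalIntegrable _ _) (hc2.intervalIntegrable _ _)]
  apply intervalIntegral.integral_nonneg zero_le_one
  intro s hs
  have : s ^ α ≤ s ^ (0:ℝ) := by
    rw [Real.rpow_zero]
    exact Real.rpow_le_one hs.1 hs.2 hα
  have h2 : 0 ≤ |s ^ θ - lam| := abs_nonneg _
  nlinarith [mul_le_mul_of_nonneg_left this h2]

lemma scale {θ lam α k : ℝ} (hθ : 0 < θ) (hlam0 : 0 ≤ lam) (hlam1 : lam ≤ 1) (hα : 0 ≤ α)
    (hk : 0 < k) :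
    ∫ t in (0:ℝ)..k, |t ^ θ - lam * k ^ θ| * (t / k) ^ α = k ^ (θ + 1) * A2 α θ lam := by
  have hbase := intervalIntegral.integral_comp_mul_add
    (a := (0:ℝ)) (b := 1) (fun t => |t ^ θ - lam * k ^ θ| * (t / k) ^ α) (ne_of_gt hk) 0
  simp only [mul_zero, add_zero, mul_one, smul_eq_mul] at hbase
  -- hbase : ∫ s in 0..1, f (k * s) = k⁻¹ * ∫ t in 0..k, f t
  have hcongr : ∫ s in (0:ℝ)..1, |(k * s) ^ θ - lam * k ^ θ| * ((k * s) / k) ^ α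
      = k ^ θ * ∫ s in (0:ℝ)..1, |s ^ θ - lam| * s ^ α := by
    rw [← intervalIntegral.integral_const_mul]
    apply intervalIntegral.integral_congr
    intro s hs
    rw [uIcc_of_le zero_le_one] at hs
    show |(k * s) ^ θ - lam * k ^ θ| * ((k * s) / k) ^ α = k ^ θ * (|s ^ θ - lam| * s ^ α)
    rw [Real.mul_rpow hk.le hs.1, mul_div_cancel_left₀ _ (ne_of_gt hk)]
    have : k ^ θ * s ^ θ - lam * k ^ θ = k ^ θ * (s ^ θ - lam) := by ring
    rw [this, abs_mul, abs_of_nonneg (Real.rpow_nonneg hk.le θ)]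
    ring
  rw [hcongr] at hbase
  rw [integral_A2 hθ hlam0 hlam1 hα] at hbase
  have : ∫ t in (0:ℝ)..k, |t ^ θ - lam * k ^ θ| * (t / k) ^ α = k * (k ^ θ * A2 α θ lam) := by
    rw [hbase]; field_simp
  rw [this, Real.rpow_add_one (ne_of_gt hk)]
  ring

lemma scale0 {θ lam k : ℝ} (hθ : 0 < θ) (hlam0 : 0 ≤ lam) (hlam1 : lam ≤ 1) (hk : 0 < k) :
    ∫ t in (0:ℝ)..k, |t ^ θ - lam * k ^ θ| = k ^ (θ + 1) * A1 θ lam := by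
  have h := scale hθ hlam0 hlam1 le_rfl hk
  simp only [Real.rpow_zero, mul_one] at h
  rw [h, A2_zero]

lemma ibp_left {f f' : ℝ → ℝ} {c u θ : ℝ} (hθ : 0 < θ) (hcu : c ≤ u)
    (hf : ∀ t ∈ Icc c u, HasDerivAt f (f' t) t)
    (hint : IntervalIntegrable f' volume c u) :
    θ * ∫ t in c..u, (t - c) ^ (θ - 1) * f t
      = (u - c) ^ θ * f u - ∫ t in c..u, (t - c) ^ θ * f' t := by
  rcases eq_or_lt_of_le hcu with h | h
  · subst h
    simp [Real.zero_rpow (ne_of_gt hθ)]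
  have hfc : ContinuousOn f (Icc c u) := fun t ht => (hf t ht).continuousAt.continuousWithinAt
  have hcont1 : Continuous fun t : ℝ => (t - c) ^ θ :=
    (cont_rpow hθ.le).comp (continuous_id.sub continuous_const)
  have hint1 : IntervalIntegrable (fun t => θ * ((t - c) ^ (θ - 1) * f t)) volume c u := by
    have h3 : IntervalIntegrable (fun t : ℝ => (t - c) ^ (θ - 1)) volume c u := by
      have h4 := (intervalIntegrable_rpow' (a := (0:ℝ)) (b := u - c)
        (show (-1:ℝ) < θ - 1 by linarith)).comp_sub_right c
      simpa using h4
    exact ((h3.mul_continuousOn (by rwa [uIcc_of_le hcu])).const_mul θ)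
  have hint2 : IntervalIntegrable (fun t => (t - c) ^ θ * f' t) volume c u := by
    exact hint.continuousOn_mul (hcont1.continuousOn)
  have key := intervalIntegral.integral_eq_sub_of_hasDeriv_right_of_le hcu
    (f := fun t => (t - c) ^ θ * f t)
    (f' := fun t => θ * ((t - c) ^ (θ - 1) * f t) + (t - c) ^ θ * f' t)
    (hcont1.continuousOn.mul hfc)
    (by
      intro t ht
      have hne : t - c ≠ 0 := ne_of_gt (sub_pos.mpr ht.1)
      have h1 : HasDerivAt (fun t : ℝ => (t - c) ^ θ) (θ * (t - c) ^ (θ - 1)) t := by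
        have := ((hasDerivAt_id t).sub_const c).rpow_const (p := θ) (Or.inl hne)
        simpa using this
      have h2 := h1.mul (hf t (Ioo_subset_Icc_self ht))
      have h3 : θ * (t - c) ^ (θ - 1) * f t + (t - c) ^ θ * f' t
          = θ * ((t - c) ^ (θ - 1) * f t) + (t - c) ^ θ * f' t := by ring
      rw [h3] at h2
      exact h2.hasDerivWithinAt)
    (hint1.add hint2)
  rw [intervalIntegral.integral_add hint1 hint2, intervalIntegral.integral_const_mul] at key
  have hz : (c - c) ^ θ = 0 := by
    rw [sub_self, Real.zero_rpow (ne_of_gt hθ)]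
  rw [hz] at key
  linarith [key]

lemma ibp_right {f f' : ℝ → ℝ} {u e θ : ℝ} (hθ : 0 < θ) (hue : u ≤ e)
    (hf : ∀ t ∈ Icc u e, HasDerivAt f (f' t) t)
    (hint : IntervalIntegrable f' volume u e) :
    θ * ∫ t in u..e, (e - t) ^ (θ - 1) * f t
      = (e - u) ^ θ * f u + ∫ t in u..e, (e - t) ^ θ * f' t := by
  rcases eq_or_lt_of_le hue with h | h
  · subst h
    simp [Real.zero_rpow (ne_of_gt hθ)]
  have hfc : ContinuousOn f (Icc u e) := fun t ht => (hf t ht).continuousAt.continuousWithinAt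
  have hcont1 : Continuous fun t : ℝ => (e - t) ^ θ :=
    (cont_rpow hθ.le).comp (continuous_const.sub continuous_id)
  have hint1 : IntervalIntegrable (fun t => θ * ((e - t) ^ (θ - 1) * f t)) volume u e := by
    have h3 : IntervalIntegrable (fun t : ℝ => (e - t) ^ (θ - 1)) volume u e := by
      have h4 := (intervalIntegrable_rpow' (a := e - u) (b := (0:ℝ))
        (show (-1:ℝ) < θ - 1 by linarith)).comp_sub_left e
      simpa using h4
    exact ((h3.mul_continuousOn (by rwa [uIcc_of_le hue])).const_mul θ)
  have hint2 : IntervalIntegrable (fun t => (e - t) ^ θ * f' t) volume u e := by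
    exact hint.continuousOn_mul (hcont1.continuousOn)
  have key := intervalIntegral.integral_eq_sub_of_hasDeriv_right_of_le hue
    (f := fun t => -((e - t) ^ θ * f t))
    (f' := fun t => θ * ((e - t) ^ (θ - 1) * f t) - (e - t) ^ θ * f' t)
    ((hcont1.continuousOn.mul hfc).neg)
    (by
      intro t ht
      have hne : e - t ≠ 0 := ne_of_gt (sub_pos.mpr ht.2)
      have h1 : HasDerivAt (fun t : ℝ => (e - t) ^ θ) (-(θ * (e - t) ^ (θ - 1))) t := by
        have := ((hasDerivAt_id t).const_sub e).rpow_const (p := θ) (Or.inl hne)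
        simpa using this
      have h2 := (h1.mul (hf t (Ioo_subset_Icc_self ht))).neg
      have h3 : -(-(θ * (e - t) ^ (θ - 1)) * f t + (e - t) ^ θ * f' t)
          = θ * ((e - t) ^ (θ - 1) * f t) - (e - t) ^ θ * f' t := by ring
      rw [h3] at h2
      exact h2.hasDerivWithinAt)
    (hint1.sub hint2)
  rw [intervalIntegral.integral_sub hint1 hint2, intervalIntegral.integral_const_mul] at key
  have hz : (e - e) ^ θ = 0 := by
    rw [sub_self, Real.zero_rpow (ne_of_gt hθ)]
  rw [hz] at key
  linarith [key]

lemma Sf_eq {f f' : ℝ → ℝ} {m a b x lam θ : ℝ} (hm0 : 0 < m) (hab : a < b) (hθ : 0 < θ)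
    (hax : a ≤ x) (hxb : x ≤ b)
    (hf : ∀ t ∈ Icc (m * a) (m * b), HasDerivAt f (f' t) t)
    (hint : IntervalIntegrable f' volume (m * a) (m * b)) :
    Sf f m a b x lam θ = (1 / (m * (b - a))) *
      ((∫ t in (m * a)..(m * x), ((t - m * a) ^ θ - lam * (m * x - m * a) ^ θ) * f' t)
        - ∫ t in (m * x)..(m * b), ((m * b - t) ^ θ - lam * (m * b - m * x) ^ θ) * f' t) := by
  set c := m * a with hc
  set u := m * x with hu
  set e := m * b with he
  have hcu : c ≤ u := by
    rw [hc, hu]; exact mul_le_mul_of_nonneg_left hax hm0.le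
  have hue : u ≤ e := by
    rw [hu, he]; exact mul_le_mul_of_nonneg_left hxb hm0.le
  have hsub1 : Icc c u ⊆ Icc c e := Icc_subset_Icc le_rfl hue
  have hsub2 : Icc u e ⊆ Icc c e := Icc_subset_Icc hcu le_rfl
  have hint1 : IntervalIntegrable f' volume c u :=
    hint.mono_set (by rw [uIcc_of_le hcu, uIcc_of_le (hcu.trans hue)]; exact hsub1)
  have hint2 : IntervalIntegrable f' volume u e :=
    hint.mono_set (by rw [uIcc_of_le hue, uIcc_of_le (hcu.trans hue)]; exact hsub2)
  have hf1 : ∀ t ∈ Icc c u, HasDerivAt f (f' t) t := fun t ht => hf t (hsub1 ht)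
  have hf2 : ∀ t ∈ Icc u e, HasDerivAt f (f' t) t := fun t ht => hf t (hsub2 ht)
  have hibpL := ibp_left hθ hcu hf1 hint1
  have hibpR := ibp_right hθ hue hf2 hint2
  have hftc1 : ∫ t in c..u, f' t = f u - f c :=
    intervalIntegral.integral_eq_sub_of_hasDerivAt
      (fun t ht => hf1 t (by rwa [uIcc_of_le hcu] at ht)) hint1
  have hftc2 : ∫ t in u..e, f' t = f e - f u :=
    intervalIntegral.integral_eq_sub_of_hasDerivAt
      (fun t ht => hf2 t (by rwa [uIcc_of_le hue] at ht)) hint2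
  have hcontL : Continuous fun t : ℝ => (t - c) ^ θ :=
    (cont_rpow hθ.le).comp (continuous_id.sub continuous_const)
  have hcontR : Continuous fun t : ℝ => (e - t) ^ θ :=
    (cont_rpow hθ.le).comp (continuous_const.sub continuous_id)
  have hsplitL : ∫ t in c..u, ((t - c) ^ θ - lam * (u - c) ^ θ) * f' t
      = (∫ t in c..u, (t - c) ^ θ * f' t) - lam * (u - c) ^ θ * (f u - f c) := by
    rw [← hftc1, ← intervalIntegral.integral_const_mul,
      ← intervalIntegral.integral_sub (hint1.continuousOn_mul hcontL.continuousOn)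
        (hint1.const_mul _)]
    apply intervalIntegral.integral_congr
    intro t _
    ring
  have hsplitR : ∫ t in u..e, ((e - t) ^ θ - lam * (e - u) ^ θ) * f' t
      = (∫ t in u..e, (e - t) ^ θ * f' t) - lam * (e - u) ^ θ * (f e - f u) := by
    rw [← hftc2, ← intervalIntegral.integral_const_mul,
      ← intervalIntegral.integral_sub (hint2.continuousOn_mul hcontR.continuousOn)
        (hint2.const_mul _)]
    apply intervalIntegral.integral_congr
    intro t _
    ring
  have hΓ : Real.Gamma θ ≠ 0 := ne_of_gt (Real.Gamma_pos_of_pos hθ)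
  have hΓ1 : Real.Gamma (θ + 1) = θ * Real.Gamma θ := Real.Gamma_add_one (ne_of_gt hθ)
  have hxa0 : 0 ≤ x - a := sub_nonneg.mpr hax
  have hbx0 : 0 ≤ b - x := sub_nonneg.mpr hxb
  have huc : u - c = m * (x - a) := by rw [hu, hc]; ring
  have heu : e - u = m * (b - x) := by rw [he, hu]; ring
  have hucθ : (u - c) ^ θ = m ^ θ * (x - a) ^ θ := by
    rw [huc, Real.mul_rpow hm0.le hxa0]
  have heuθ : (e - u) ^ θ = m ^ θ * (b - x) ^ θ := by
    rw [heu, Real.mul_rpow hm0.le hbx0]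
  have hmθ : m ^ (θ - 1) = m ^ θ / m := by
    rw [Real.rpow_sub hm0, Real.rpow_one]
  have hba : b - a ≠ 0 := ne_of_gt (sub_pos.mpr hab)
  have hm' : m ≠ 0 := ne_of_gt hm0
  rw [Sf, rlLeft, rlRight, hsplitL, hsplitR]
  rw [← hc, ← hu, ← he]
  -- replace the RL integrals using ibp results
  have hIL : ∫ t in c..u, (t - c) ^ (θ - 1) * f t
      = ((u - c) ^ θ * f u - ∫ t in c..u, (t - c) ^ θ * f' t) / θ := by
    field_simp [ne_of_gt hθ] at hibpL ⊢
    linarith [hibpL]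
  have hIR : ∫ t in u..e, (e - t) ^ (θ - 1) * f t
      = ((e - u) ^ θ * f u + ∫ t in u..e, (e - t) ^ θ * f' t) / θ := by
    field_simp [ne_of_gt hθ] at hibpR ⊢
    linarith [hibpR]
  rw [hIL, hIR, hΓ1, hucθ, heuθ, hmθ]
  field_simp
  ring

lemma holder_aux {μ : Measure ℝ} {w F : ℝ → ℝ} {q : ℝ} (hq : 1 < q)
    (hw_nn : 0 ≤ᵐ[μ] w) (hw_int : Integrable w μ)
    (hF_meas : AEStronglyMeasurable F μ)
    (hwFq_int : Integrable (fun t => w t * |F t| ^ q) μ) :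
    ∫ t, w t * |F t| ∂μ ≤ (∫ t, w t ∂μ) ^ (1 - 1/q) * (∫ t, w t * |F t| ^ q ∂μ) ^ (1/q) := by
  have hq0 : 0 < q := lt_trans zero_lt_one hq
  have hpq : (Real.conjExponent q).HolderConjugate q :=
    (Real.HolderConjugate.conjExponent hq).symm
  set p := Real.conjExponent q with hp
  have hp1 : 1 < p := hpq.lt
  have hp0 : 0 < p := hpq.pos
  have hinv : p⁻¹ = 1 - 1/q := by
    have := hpq.inv_add_inv_eq_one
    rw [one_div]; linarith
  set φ := fun t => w t ^ p⁻¹ with hφ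
  set ψ := fun t => w t ^ q⁻¹ * |F t| with hψ
  have hφ_nn : 0 ≤ᵐ[μ] φ := by
    filter_upwards [hw_nn] with t ht
    exact Real.rpow_nonneg ht _
  have hψ_nn : 0 ≤ᵐ[μ] ψ := by
    filter_upwards [hw_nn] with t ht
    exact mul_nonneg (Real.rpow_nonneg ht _) (abs_nonneg _)
  have hw_meas : AEStronglyMeasurable w μ := hw_int.aestronglyMeasurable
  have hφ_meas : AEStronglyMeasurable φ μ :=
    (cont_rpow (by positivity : (0:ℝ) ≤ p⁻¹)).comp_aestronglyMeasurable hw_meas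
  have hψ_meas : AEStronglyMeasurable ψ μ :=
    ((cont_rpow (by positivity : (0:ℝ) ≤ q⁻¹)).comp_aestronglyMeasurable hw_meas).mul
      (continuous_abs.comp_aestronglyMeasurable hF_meas)
  -- MemLp φ (ENNReal.ofReal p)
  have hφp : MemLp φ (ENNReal.ofReal p) μ := by
    have h1 : MemLp w 1 μ := memLp_one_iff_integrable.mpr hw_int
    have h2 := h1.norm_rpow_div (ENNReal.ofReal p⁻¹)
    have h3 : (1 : ENNReal) / ENNReal.ofReal p⁻¹ = ENNReal.ofReal p := by
      rw [ENNReal.ofReal_inv_of_pos hp0, one_div, inv_inv]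
    have h4 : (ENNReal.ofReal p⁻¹).toReal = p⁻¹ := ENNReal.toReal_ofReal (by positivity)
    rw [h3, h4] at h2
    refine (memLp_congr_ae ?_).mp h2
    filter_upwards [hw_nn] with t ht
    rw [Real.norm_eq_abs, abs_of_nonneg ht]
  -- MemLp ψ (ENNReal.ofReal q)
  have hψq : MemLp ψ (ENNReal.ofReal q) μ := by
    have hq_ne : ENNReal.ofReal q ≠ 0 := by
      simp [ENNReal.ofReal_eq_zero, not_le, hq0]
    have hiff := memLp_norm_rpow_iff (q := ENNReal.ofReal q) (p := ENNReal.ofReal q)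
      hψ_meas hq_ne ENNReal.ofReal_ne_top
    have hdiv : ENNReal.ofReal q / ENNReal.ofReal q = 1 :=
      ENNReal.div_self hq_ne ENNReal.ofReal_ne_top
    rw [hdiv] at hiff
    apply hiff.mp
    rw [memLp_one_iff_integrable]
    have h4 : (ENNReal.ofReal q).toReal = q := ENNReal.toReal_ofReal hq0.le
    rw [h4]
    apply hwFq_int.congr ?_
    filter_upwards [hw_nn] with t ht
    have hψt : 0 ≤ ψ t := mul_nonneg (Real.rpow_nonneg ht _) (abs_nonneg _)
    rw [Real.norm_eq_abs, abs_of_nonneg hψt, hψ]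
    show w t * |F t| ^ q = (w t ^ q⁻¹ * |F t|) ^ q
    rw [Real.mul_rpow (Real.rpow_nonneg ht _) (abs_nonneg _),
      ← Real.rpow_mul ht, inv_mul_cancel₀ (ne_of_gt hq0), Real.rpow_one]
  have hH := MeasureTheory.integral_mul_le_Lp_mul_Lq_of_nonneg hpq hφ_nn hψ_nn hφp hψq
  have hprod : ∫ t, φ t * ψ t ∂μ = ∫ t, w t * |F t| ∂μ := by
    apply MeasureTheory.integral_congr_ae
    filter_upwards [hw_nn] with t ht
    rw [hφ, hψ]
    show w t ^ p⁻¹ * (w t ^ q⁻¹ * |F t|) = w t * |F t|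
    rw [← mul_assoc, ← Real.rpow_add' ht (by rw [hpq.inv_add_inv_eq_one]; norm_num),
      hpq.inv_add_inv_eq_one, Real.rpow_one]
  have hφp' : ∫ t, φ t ^ p ∂μ = ∫ t, w t ∂μ := by
    apply MeasureTheory.integral_congr_ae
    filter_upwards [hw_nn] with t ht
    rw [hφ]
    show (w t ^ p⁻¹) ^ p = w t
    rw [← Real.rpow_mul ht, inv_mul_cancel₀ (ne_of_gt hp0), Real.rpow_one]
  have hψq' : ∫ t, ψ t ^ q ∂μ = ∫ t, w t * |F t| ^ q ∂μ := by
    apply MeasureTheory.integral_congr_ae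
    filter_upwards [hw_nn] with t ht
    rw [hψ]
    show (w t ^ q⁻¹ * |F t|) ^ q = w t * |F t| ^ q
    rw [Real.mul_rpow (Real.rpow_nonneg ht _) (abs_nonneg _),
      ← Real.rpow_mul ht, inv_mul_cancel₀ (ne_of_gt hq0), Real.rpow_one]
  rw [hprod, hφp', hψq'] at hH
  have h1p : 1/p = 1 - 1/q := by rw [one_div, hinv]
  rw [h1p] at hH
  exact hH

lemma side_core {w F D : ℝ → ℝ} {c u q : ℝ} (hq : 1 ≤ q) (hcu : c ≤ u)
    (hw_cont : ContinuousOn w (Icc c u)) (hw_nn : ∀ t ∈ Icc c u, 0 ≤ w t)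
    (hF_int : IntervalIntegrable F volume c u)
    (hD_cont : ContinuousOn D (Icc c u)) (hD_nn : ∀ t ∈ Icc c u, 0 ≤ D t)
    (hdom : ∀ t ∈ Icc c u, |F t| ^ q ≤ D t) :
    ∫ t in c..u, w t * |F t|
      ≤ (∫ t in c..u, w t) ^ (1 - 1/q) * (∫ t in c..u, w t * D t) ^ (1/q) := by
  have hq0 : 0 < q := lt_of_lt_of_le zero_lt_one hq
  have huIcc : uIcc c u = Icc c u := uIcc_of_le hcu
  have hw_int : IntervalIntegrable w volume c u :=
    (by rwa [huIcc] : ContinuousOn w (uIcc c u)).intervalIntegrable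
  have hwD_int : IntervalIntegrable (fun t => w t * D t) volume c u :=
    (by rw [huIcc]; exact hw_cont.mul hD_cont : ContinuousOn (fun t => w t * D t)
      (uIcc c u)).intervalIntegrable
  have hwF_int : IntervalIntegrable (fun t => w t * |F t|) volume c u :=
    hF_int.abs.continuousOn_mul (by rwa [huIcc])
  have hF_meas : AEStronglyMeasurable F (volume.restrict (Ioc c u)) :=
    ((intervalIntegrable_iff_integrableOn_Ioc_of_le hcu).mp hF_int).aestronglyMeasurable
  have hw_meas : AEStronglyMeasurable w (volume.restrict (Ioc c u)) :=
    ((intervalIntegrable_iff_integrableOn_Ioc_of_le hcu).mp hw_int).aestronglyMeasurable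
  have hwFq_meas : AEStronglyMeasurable (fun t => w t * |F t| ^ q)
      (volume.restrict (Ioc c u)) :=
    hw_meas.mul ((cont_rpow hq0.le).comp_aestronglyMeasurable
      (continuous_abs.comp_aestronglyMeasurable hF_meas))
  have hwFq_int : Integrable (fun t => w t * |F t| ^ q) (volume.restrict (Ioc c u)) := by
    apply Integrable.mono' ((intervalIntegrable_iff_integrableOn_Ioc_of_le hcu).mp hwD_int)
      hwFq_meas
    rw [ae_restrict_iff' measurableSet_Ioc]
    apply ae_of_all
    intro t ht
    have ht' : t ∈ Icc c u := Ioc_subset_Icc_self ht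
    have h1 : 0 ≤ w t * |F t| ^ q :=
      mul_nonneg (hw_nn t ht') (Real.rpow_nonneg (abs_nonneg _) _)
    rw [Real.norm_eq_abs, abs_of_nonneg h1]
    exact mul_le_mul_of_nonneg_left (hdom t ht') (hw_nn t ht')
  have hmono : ∫ t in Ioc c u, w t * |F t| ^ q ≤ ∫ t in Ioc c u, w t * D t := by
    apply MeasureTheory.integral_mono_ae hwFq_int
      ((intervalIntegrable_iff_integrableOn_Ioc_of_le hcu).mp hwD_int)
    rw [Filter.EventuallyLE, ae_restrict_iff' measurableSet_Ioc]
    apply ae_of_all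
    intro t ht
    have ht' : t ∈ Icc c u := Ioc_subset_Icc_self ht
    exact mul_le_mul_of_nonneg_left (hdom t ht') (hw_nn t ht')
  have hwFq_nn : 0 ≤ ∫ t in Ioc c u, w t * |F t| ^ q := by
    apply MeasureTheory.integral_nonneg_of_ae
    rw [Filter.EventuallyLE, ae_restrict_iff' measurableSet_Ioc]
    apply ae_of_all
    intro t ht
    exact mul_nonneg (hw_nn t (Ioc_subset_Icc_self ht)) (Real.rpow_nonneg (abs_nonneg _) _)
  rw [intervalIntegral.integral_of_le hcu, intervalIntegral.integral_of_le hcu,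
    intervalIntegral.integral_of_le hcu]
  rcases eq_or_lt_of_le hq with hq1 | hq1
  · -- q = 1
    subst hq1
    simp only [div_one, sub_self, Real.rpow_zero, one_mul, Real.rpow_one]
    calc ∫ t in Ioc c u, w t * |F t| = ∫ t in Ioc c u, w t * |F t| ^ (1:ℝ) := by
          simp [Real.rpow_one]
      _ ≤ ∫ t in Ioc c u, w t * D t := hmono
  · -- 1 < q
    have hH := holder_aux (μ := volume.restrict (Ioc c u)) hq1
      (by
        rw [Filter.EventuallyLE, ae_restrict_iff' measurableSet_Ioc]
        exact ae_of_all _ fun t ht => hw_nn t (Ioc_subset_Icc_self ht))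
      ((intervalIntegrable_iff_integrableOn_Ioc_of_le hcu).mp hw_int)
      hF_meas hwFq_int
    calc ∫ t in Ioc c u, w t * |F t|
        ≤ (∫ t in Ioc c u, w t) ^ (1 - 1/q) * (∫ t in Ioc c u, w t * |F t| ^ q) ^ (1/q) := hH
      _ ≤ (∫ t in Ioc c u, w t) ^ (1 - 1/q) * (∫ t in Ioc c u, w t * D t) ^ (1/q) := by
          apply mul_le_mul_of_nonneg_left
          · exact Real.rpow_le_rpow hwFq_nn hmono (by positivity)
          · apply Real.rpow_nonneg
            apply MeasureTheory.integral_nonneg_of_ae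
            rw [Filter.EventuallyLE, ae_restrict_iff' measurableSet_Ioc]
            exact ae_of_all _ fun t ht => hw_nn t (Ioc_subset_Icc_self ht)


theorem powmean_ineq
    (I : Set ℝ) (hI : Set.OrdConnected I) (hI0 : I ⊆ Set.Ici (0:ℝ)) (f f' : ℝ → ℝ) (m a b : ℝ)
    (hm : m ∈ Set.Ioc (0:ℝ) 1) (hab : a < b)
    (hma : m * a ∈ interior I) (hb : b ∈ interior I)
    (hf : ∀ y ∈ interior I, HasDerivAt f (f' y) y)
    (hint : IntervalIntegrable f' MeasureTheory.volume (m * a) (m * b))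
    (α q : ℝ) (hα : α ∈ Set.Icc (0:ℝ) 1) (hq : 1 ≤ q)
    (hconv : AlphaMConvexOn α m (m * a) b (fun u => |f' u| ^ q)) :
    ∀ x ∈ Set.Icc a b, ∀ lam ∈ Set.Icc (0:ℝ) 1, ∀ θ : ℝ, 0 < θ →
      |Sf f m a b x lam θ| ≤
        m ^ θ * (A1 θ lam) ^ (1 - 1 / q) / (b - a) *
          ((x - a) ^ (θ + 1) *
              (|f' (m * x)| ^ q * A2 α θ lam + m * |f' a| ^ q * A3 α θ lam) ^ (1 / q) +
            (b - x) ^ (θ + 1) *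
              (|f' (m * x)| ^ q * A2 α θ lam + m * |f' b| ^ q * A3 α θ lam) ^ (1 / q)) := by
  intro x hx lam hlam θ hθ
  obtain ⟨hm0, hm1⟩ := hm
  obtain ⟨hα0, hα1⟩ := hα
  obtain ⟨hlam0, hlam1⟩ := hlam
  obtain ⟨hax, hxb⟩ := hx
  have hq0 : 0 < q := lt_of_lt_of_le zero_lt_one hq
  have hma0 : (0:ℝ) ≤ m * a := hI0 (interior_subset hma)
  have ha0 : 0 ≤ a := by nlinarith
  have hb0 : 0 ≤ b := hI0 (interior_subset hb)
  have hmaa : m * a ≤ a := by nlinarith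
  have hmbb : m * b ≤ b := by nlinarith
  have hIsub : Icc (m * a) b ⊆ interior I := hI.interior.out hma hb
  have hsub : Icc (m * a) (m * b) ⊆ Icc (m * a) b := Icc_subset_Icc le_rfl hmbb
  have hf' : ∀ t ∈ Icc (m * a) (m * b), HasDerivAt f (f' t) t :=
    fun t ht => hf t (hIsub (hsub ht))
  have hba : (0:ℝ) < b - a := sub_pos.mpr hab
  have hcu : m * a ≤ m * x := mul_le_mul_of_nonneg_left hax hm0.le
  have hue : m * x ≤ m * b := mul_le_mul_of_nonneg_left hxb hm0.le
  have hA1nn : 0 ≤ A1 θ lam := A1_nonneg hθ hlam0 hlam1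
  have hA2nn : 0 ≤ A2 α θ lam := A2_nonneg hθ hlam0 hlam1 hα0
  have hA3nn : 0 ≤ A3 α θ lam := A3_nonneg hθ hlam0 hlam1 hα0
  have hC1nn : (0:ℝ) ≤ |f' (m * x)| ^ q := Real.rpow_nonneg (abs_nonneg _) _
  have hCann : (0:ℝ) ≤ |f' a| ^ q := Real.rpow_nonneg (abs_nonneg _) _
  have hCbnn : (0:ℝ) ≤ |f' b| ^ q := Real.rpow_nonneg (abs_nonneg _) _
  have hB1nn : 0 ≤ |f' (m * x)| ^ q * A2 α θ lam + m * |f' a| ^ q * A3 α θ lam :=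
    add_nonneg (mul_nonneg hC1nn hA2nn) (mul_nonneg (mul_nonneg hm0.le hCann) hA3nn)
  have hB2nn : 0 ≤ |f' (m * x)| ^ q * A2 α θ lam + m * |f' b| ^ q * A3 α θ lam :=
    add_nonneg (mul_nonneg hC1nn hA2nn) (mul_nonneg (mul_nonneg hm0.le hCbnn) hA3nn)
  have hint1 : IntervalIntegrable f' volume (m * a) (m * x) :=
    hint.mono_set (by
      rw [uIcc_of_le hcu, uIcc_of_le (hcu.trans hue)]
      exact Icc_subset_Icc le_rfl hue)
  have hint2 : IntervalIntegrable f' volume (m * x) (m * b) :=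
    hint.mono_set (by
      rw [uIcc_of_le hue, uIcc_of_le (hcu.trans hue)]
      exact Icc_subset_Icc hcu le_rfl)
  have hS1 : |∫ t in (m * a)..(m * x), ((t - m * a) ^ θ - lam * (m * x - m * a) ^ θ) * f' t|
      ≤ m ^ (θ + 1) * (x - a) ^ (θ + 1) * A1 θ lam ^ (1 - 1/q) *
        (|f' (m * x)| ^ q * A2 α θ lam + m * |f' a| ^ q * A3 α θ lam) ^ (1/q) := by
    rcases eq_or_lt_of_le hax with h | h
    · subst h
      rw [intervalIntegral.integral_same, abs_zero, sub_self,
        Real.zero_rpow (ne_of_gt (by positivity : (0:ℝ) < θ + 1))]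
      have h1 : (0:ℝ) ≤ A1 θ lam ^ (1 - 1/q) := Real.rpow_nonneg hA1nn _
      have h2 : (0:ℝ) ≤ (|f' (m * a)| ^ q * A2 α θ lam + m * |f' a| ^ q * A3 α θ lam) ^ (1/q) :=
        Real.rpow_nonneg (by
          exact add_nonneg (mul_nonneg (Real.rpow_nonneg (abs_nonneg _) _) hA2nn)
            (mul_nonneg (mul_nonneg hm0.le hCann) hA3nn)) _
      have h3 : (0:ℝ) ≤ m ^ (θ + 1) := Real.rpow_nonneg hm0.le _
      nlinarith
    · set k := m * x - m * a with hk
      have hk0 : 0 < k := by rw [hk]; nlinarith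
      have hstepA : |∫ t in (m * a)..(m * x), ((t - m * a) ^ θ - lam * k ^ θ) * f' t|
          ≤ ∫ t in (m * a)..(m * x), |(t - m * a) ^ θ - lam * k ^ θ| * |f' t| := by
        refine le_trans (intervalIntegral.abs_integral_le_integral_abs hcu) (le_of_eq ?_)
        apply intervalIntegral.integral_congr
        intro t _
        exact abs_mul _ _
      have hwcont : Continuous fun t : ℝ => |(t - m * a) ^ θ - lam * k ^ θ| :=
        (((cont_rpow hθ.le).comp (continuous_id.sub continuous_const)).sub continuous_const).abs
      have hσcont : Continuous fun t : ℝ => ((t - m * a) / k) ^ α :=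
        (cont_rpow hα0).comp ((continuous_id.sub continuous_const).div_const k)
      have hDcont : Continuous fun t : ℝ =>
          ((t - m * a) / k) ^ α * |f' (m * x)| ^ q
            + m * (1 - ((t - m * a) / k) ^ α) * |f' a| ^ q :=
        (hσcont.mul continuous_const).add
          ((continuous_const.mul (continuous_const.sub hσcont)).mul continuous_const)
      have hσmem : ∀ t ∈ Icc (m * a) (m * x),
          0 ≤ ((t - m * a) / k) ^ α ∧ ((t - m * a) / k) ^ α ≤ 1 := by
        intro t ht
        have h1 : 0 ≤ (t - m * a) / k := div_nonneg (by linarith [ht.1]) hk0.le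
        have h2 : (t - m * a) / k ≤ 1 := by
          rw [div_le_one hk0, hk]; linarith [ht.2]
        exact ⟨Real.rpow_nonneg h1 _, Real.rpow_le_one h1 h2 hα0⟩
      have hDnn : ∀ t ∈ Icc (m * a) (m * x),
          0 ≤ ((t - m * a) / k) ^ α * |f' (m * x)| ^ q
            + m * (1 - ((t - m * a) / k) ^ α) * |f' a| ^ q := by
        intro t ht
        obtain ⟨h1, h2⟩ := hσmem t ht
        exact add_nonneg (mul_nonneg h1 hC1nn)
          (mul_nonneg (mul_nonneg hm0.le (by linarith)) hCann)
      have hdom : ∀ t ∈ Icc (m * a) (m * x),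
          |f' t| ^ q ≤ ((t - m * a) / k) ^ α * |f' (m * x)| ^ q
            + m * (1 - ((t - m * a) / k) ^ α) * |f' a| ^ q := by
        intro t ht
        set s := (t - m * a) / k with hs
        have hs0 : 0 ≤ s := div_nonneg (by linarith [ht.1]) hk0.le
        have hs1 : s ≤ 1 := by rw [hs, div_le_one hk0, hk]; linarith [ht.2]
        have hpt : s * (m * x) + m * (1 - s) * a = t := by
          rw [hs, hk]
          field_simp
          ring
        have hmem1 : m * x ∈ Icc (m * a) b := ⟨hcu, by nlinarith⟩
        have hmem2 : a ∈ Icc (m * a) b := ⟨hmaa, hab.le⟩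
        have hmem3 : s * (m * x) + m * (1 - s) * a ∈ Icc (m * a) b := by
          rw [hpt]
          exact ⟨ht.1, by nlinarith [ht.2]⟩
        have hcv := hconv (m * x) hmem1 a hmem2 s ⟨hs0, hs1⟩ hmem3
        rw [hpt] at hcv
        simpa using hcv
      have hB := side_core hq hcu hwcont.continuousOn (fun t _ => abs_nonneg _) hint1
        hDcont.continuousOn hDnn hdom
      have hW : (∫ t in (m * a)..(m * x), |(t - m * a) ^ θ - lam * k ^ θ|)
          = k ^ (θ + 1) * A1 θ lam := by
        have h1 := intervalIntegral.integral_comp_sub_right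
          (a := m * a) (b := m * x) (fun r => |r ^ θ - lam * k ^ θ|) (m * a)
        simp only [sub_self] at h1
        rw [← hk] at h1
        rw [h1]
        exact scale0 hθ hlam0 hlam1 hk0
      have hWσ : (∫ t in (m * a)..(m * x),
            |(t - m * a) ^ θ - lam * k ^ θ| * ((t - m * a) / k) ^ α)
          = k ^ (θ + 1) * A2 α θ lam := by
        have h1 := intervalIntegral.integral_comp_sub_right
          (a := m * a) (b := m * x) (fun r => |r ^ θ - lam * k ^ θ| * (r / k) ^ α) (m * a)
        simp only [sub_self] at h1
        rw [← hk] at h1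
        rw [h1]
        exact scale hθ hlam0 hlam1 hα0 hk0
      have hWD : (∫ t in (m * a)..(m * x), |(t - m * a) ^ θ - lam * k ^ θ| *
            (((t - m * a) / k) ^ α * |f' (m * x)| ^ q
              + m * (1 - ((t - m * a) / k) ^ α) * |f' a| ^ q))
          = k ^ (θ + 1) * (|f' (m * x)| ^ q * A2 α θ lam + m * |f' a| ^ q * A3 α θ lam) := by
        have hiw : IntervalIntegrable (fun t => |(t - m * a) ^ θ - lam * k ^ θ|)
            volume (m * a) (m * x) := hwcont.intervalIntegrable _ _
        have hiwσ : IntervalIntegrable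
            (fun t => |(t - m * a) ^ θ - lam * k ^ θ| * ((t - m * a) / k) ^ α)
            volume (m * a) (m * x) := (hwcont.mul hσcont).intervalIntegrable _ _
        have hsplit : (∫ t in (m * a)..(m * x), |(t - m * a) ^ θ - lam * k ^ θ| *
              (((t - m * a) / k) ^ α * |f' (m * x)| ^ q
                + m * (1 - ((t - m * a) / k) ^ α) * |f' a| ^ q))
            = |f' (m * x)| ^ q * (∫ t in (m * a)..(m * x),
                |(t - m * a) ^ θ - lam * k ^ θ| * ((t - m * a) / k) ^ α)
              + (m * |f' a| ^ q * (∫ t in (m * a)..(m * x), |(t - m * a) ^ θ - lam * k ^ θ|)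
              - m * |f' a| ^ q * (∫ t in (m * a)..(m * x),
                |(t - m * a) ^ θ - lam * k ^ θ| * ((t - m * a) / k) ^ α)) := by
          rw [← intervalIntegral.integral_const_mul, ← intervalIntegral.integral_const_mul,
            ← intervalIntegral.integral_const_mul,
            ← intervalIntegral.integral_sub ((hiw.const_mul _)) ((hiwσ.const_mul _)),
            ← intervalIntegral.integral_add ((hiwσ.const_mul _))
              ((hiw.const_mul _).sub (hiwσ.const_mul _))]
          apply intervalIntegral.integral_congr
          intro t _
          ring
        rw [hsplit, hW, hWσ, A3]
        ring
      rw [hW, hWD] at hB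
      have hKnn : (0:ℝ) ≤ k ^ (θ + 1) := Real.rpow_nonneg hk0.le _
      have hkk : k ^ (θ + 1) = m ^ (θ + 1) * (x - a) ^ (θ + 1) := by
        rw [hk, show m * x - m * a = m * (x - a) by ring,
          Real.mul_rpow hm0.le (by linarith : (0:ℝ) ≤ x - a)]
      have hexp : (1 - 1/q) + 1/q = 1 := by ring
      have h2 : (k ^ (θ + 1)) ^ (1 - 1/q) * (k ^ (θ + 1)) ^ (1/q) = k ^ (θ + 1) := by
        rw [← Real.rpow_add' hKnn (by rw [hexp]; norm_num), hexp, Real.rpow_one]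
      have hcomb : (k ^ (θ + 1) * A1 θ lam) ^ (1 - 1/q) * (k ^ (θ + 1) *
            (|f' (m * x)| ^ q * A2 α θ lam + m * |f' a| ^ q * A3 α θ lam)) ^ (1/q)
          = m ^ (θ + 1) * (x - a) ^ (θ + 1) * A1 θ lam ^ (1 - 1/q) *
            (|f' (m * x)| ^ q * A2 α θ lam + m * |f' a| ^ q * A3 α θ lam) ^ (1/q) := by
        rw [Real.mul_rpow hKnn hA1nn, Real.mul_rpow hKnn hB1nn]
        calc (k ^ (θ + 1)) ^ (1 - 1/q) * A1 θ lam ^ (1 - 1/q) *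
              ((k ^ (θ + 1)) ^ (1/q) *
                (|f' (m * x)| ^ q * A2 α θ lam + m * |f' a| ^ q * A3 α θ lam) ^ (1/q))
            = ((k ^ (θ + 1)) ^ (1 - 1/q) * (k ^ (θ + 1)) ^ (1/q)) *
              (A1 θ lam ^ (1 - 1/q) *
                (|f' (m * x)| ^ q * A2 α θ lam + m * |f' a| ^ q * A3 α θ lam) ^ (1/q)) := by
              ring
          _ = _ := by rw [h2, hkk]; ring
      calc |∫ t in (m * a)..(m * x), ((t - m * a) ^ θ - lam * k ^ θ) * f' t|
          ≤ ∫ t in (m * a)..(m * x), |(t - m * a) ^ θ - lam * k ^ θ| * |f' t| := hstepA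
        _ ≤ _ := by rw [← hcomb]; exact hB
  have hS2 : |∫ t in (m * x)..(m * b), ((m * b - t) ^ θ - lam * (m * b - m * x) ^ θ) * f' t|
      ≤ m ^ (θ + 1) * (b - x) ^ (θ + 1) * A1 θ lam ^ (1 - 1/q) *
        (|f' (m * x)| ^ q * A2 α θ lam + m * |f' b| ^ q * A3 α θ lam) ^ (1/q) := by
    rcases eq_or_lt_of_le hxb with h | h
    · subst h
      rw [intervalIntegral.integral_same, abs_zero, sub_self,
        Real.zero_rpow (ne_of_gt (by positivity : (0:ℝ) < θ + 1))]
      have h1 : (0:ℝ) ≤ A1 θ lam ^ (1 - 1/q) := Real.rpow_nonneg hA1nn _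
      have h2 : (0:ℝ) ≤ (|f' (m * x)| ^ q * A2 α θ lam + m * |f' x| ^ q * A3 α θ lam) ^ (1/q) :=
        Real.rpow_nonneg (by
          exact add_nonneg (mul_nonneg hC1nn hA2nn)
            (mul_nonneg (mul_nonneg hm0.le (Real.rpow_nonneg (abs_nonneg _) _)) hA3nn)) _
      have h3 : (0:ℝ) ≤ m ^ (θ + 1) := Real.rpow_nonneg hm0.le _
      nlinarith
    · set k := m * b - m * x with hk
      have hk0 : 0 < k := by rw [hk]; nlinarith
      have hstepA : |∫ t in (m * x)..(m * b), ((m * b - t) ^ θ - lam * k ^ θ) * f' t|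
          ≤ ∫ t in (m * x)..(m * b), |(m * b - t) ^ θ - lam * k ^ θ| * |f' t| := by
        refine le_trans (intervalIntegral.abs_integral_le_integral_abs hue) (le_of_eq ?_)
        apply intervalIntegral.integral_congr
        intro t _
        exact abs_mul _ _
      have hwcont : Continuous fun t : ℝ => |(m * b - t) ^ θ - lam * k ^ θ| :=
        (((cont_rpow hθ.le).comp (continuous_const.sub continuous_id)).sub continuous_const).abs
      have hσcont : Continuous fun t : ℝ => ((m * b - t) / k) ^ α :=
        (cont_rpow hα0).comp ((continuous_const.sub continuous_id).div_const k)
      have hDcont : Continuous fun t : ℝ =>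
          ((m * b - t) / k) ^ α * |f' (m * x)| ^ q
            + m * (1 - ((m * b - t) / k) ^ α) * |f' b| ^ q :=
        (hσcont.mul continuous_const).add
          ((continuous_const.mul (continuous_const.sub hσcont)).mul continuous_const)
      have hσmem : ∀ t ∈ Icc (m * x) (m * b),
          0 ≤ ((m * b - t) / k) ^ α ∧ ((m * b - t) / k) ^ α ≤ 1 := by
        intro t ht
        have h1 : 0 ≤ (m * b - t) / k := div_nonneg (by linarith [ht.2]) hk0.le
        have h2 : (m * b - t) / k ≤ 1 := by
          rw [div_le_one hk0, hk]; linarith [ht.1]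
        exact ⟨Real.rpow_nonneg h1 _, Real.rpow_le_one h1 h2 hα0⟩
      have hDnn : ∀ t ∈ Icc (m * x) (m * b),
          0 ≤ ((m * b - t) / k) ^ α * |f' (m * x)| ^ q
            + m * (1 - ((m * b - t) / k) ^ α) * |f' b| ^ q := by
        intro t ht
        obtain ⟨h1, h2⟩ := hσmem t ht
        exact add_nonneg (mul_nonneg h1 hC1nn)
          (mul_nonneg (mul_nonneg hm0.le (by linarith)) hCbnn)
      have hdom : ∀ t ∈ Icc (m * x) (m * b),
          |f' t| ^ q ≤ ((m * b - t) / k) ^ α * |f' (m * x)| ^ q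
            + m * (1 - ((m * b - t) / k) ^ α) * |f' b| ^ q := by
        intro t ht
        set s := (m * b - t) / k with hs
        have hs0 : 0 ≤ s := div_nonneg (by linarith [ht.2]) hk0.le
        have hs1 : s ≤ 1 := by rw [hs, div_le_one hk0, hk]; linarith [ht.1]
        have hpt : s * (m * x) + m * (1 - s) * b = t := by
          rw [hs, hk]
          field_simp
          ring
        have hmem1 : m * x ∈ Icc (m * a) b := ⟨hcu, by nlinarith⟩
        have hmem2 : b ∈ Icc (m * a) b := ⟨by nlinarith, le_rfl⟩
        have hmem3 : s * (m * x) + m * (1 - s) * b ∈ Icc (m * a) b := by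
          rw [hpt]
          constructor
          · linarith [ht.1]
          · linarith [ht.2]
        have hcv := hconv (m * x) hmem1 b hmem2 s ⟨hs0, hs1⟩ hmem3
        rw [hpt] at hcv
        simpa using hcv
      have hB := side_core hq hue hwcont.continuousOn (fun t _ => abs_nonneg _) hint2
        hDcont.continuousOn hDnn hdom
      have hW : (∫ t in (m * x)..(m * b), |(m * b - t) ^ θ - lam * k ^ θ|)
          = k ^ (θ + 1) * A1 θ lam := by
        have h1 := intervalIntegral.integral_comp_sub_left
          (a := m * x) (b := m * b) (fun r => |r ^ θ - lam * k ^ θ|) (m * b)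
        simp only [sub_self] at h1
        rw [← hk] at h1
        rw [h1]
        exact scale0 hθ hlam0 hlam1 hk0
      have hWσ : (∫ t in (m * x)..(m * b),
            |(m * b - t) ^ θ - lam * k ^ θ| * ((m * b - t) / k) ^ α)
          = k ^ (θ + 1) * A2 α θ lam := by
        have h1 := intervalIntegral.integral_comp_sub_left
          (a := m * x) (b := m * b) (fun r => |r ^ θ - lam * k ^ θ| * (r / k) ^ α) (m * b)
        simp only [sub_self] at h1
        rw [← hk] at h1
        rw [h1]
        exact scale hθ hlam0 hlam1 hα0 hk0
      have hWD : (∫ t in (m * x)..(m * b), |(m * b - t) ^ θ - lam * k ^ θ| *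
            (((m * b - t) / k) ^ α * |f' (m * x)| ^ q
              + m * (1 - ((m * b - t) / k) ^ α) * |f' b| ^ q))
          = k ^ (θ + 1) * (|f' (m * x)| ^ q * A2 α θ lam + m * |f' b| ^ q * A3 α θ lam) := by
        have hiw : IntervalIntegrable (fun t => |(m * b - t) ^ θ - lam * k ^ θ|)
            volume (m * x) (m * b) := hwcont.intervalIntegrable _ _
        have hiwσ : IntervalIntegrable
            (fun t => |(m * b - t) ^ θ - lam * k ^ θ| * ((m * b - t) / k) ^ α)
            volume (m * x) (m * b) := (hwcont.mul hσcont).intervalIntegrable _ _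
        have hsplit : (∫ t in (m * x)..(m * b), |(m * b - t) ^ θ - lam * k ^ θ| *
              (((m * b - t) / k) ^ α * |f' (m * x)| ^ q
                + m * (1 - ((m * b - t) / k) ^ α) * |f' b| ^ q))
            = |f' (m * x)| ^ q * (∫ t in (m * x)..(m * b),
                |(m * b - t) ^ θ - lam * k ^ θ| * ((m * b - t) / k) ^ α)
              + (m * |f' b| ^ q * (∫ t in (m * x)..(m * b), |(m * b - t) ^ θ - lam * k ^ θ|)
              - m * |f' b| ^ q * (∫ t in (m * x)..(m * b),
                |(m * b - t) ^ θ - lam * k ^ θ| * ((m * b - t) / k) ^ α)) := by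
          rw [← intervalIntegral.integral_const_mul, ← intervalIntegral.integral_const_mul,
            ← intervalIntegral.integral_const_mul,
            ← intervalIntegral.integral_sub ((hiw.const_mul _)) ((hiwσ.const_mul _)),
            ← intervalIntegral.integral_add ((hiwσ.const_mul _))
              ((hiw.const_mul _).sub (hiwσ.const_mul _))]
          apply intervalIntegral.integral_congr
          intro t _
          ring
        rw [hsplit, hW, hWσ, A3]
        ring
      rw [hW, hWD] at hB
      have hKnn : (0:ℝ) ≤ k ^ (θ + 1) := Real.rpow_nonneg hk0.le _
      have hkk : k ^ (θ + 1) = m ^ (θ + 1) * (b - x) ^ (θ + 1) := by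
        rw [hk, show m * b - m * x = m * (b - x) by ring,
          Real.mul_rpow hm0.le (by linarith : (0:ℝ) ≤ b - x)]
      have hexp : (1 - 1/q) + 1/q = 1 := by ring
      have h2 : (k ^ (θ + 1)) ^ (1 - 1/q) * (k ^ (θ + 1)) ^ (1/q) = k ^ (θ + 1) := by
        rw [← Real.rpow_add' hKnn (by rw [hexp]; norm_num), hexp, Real.rpow_one]
      have hcomb : (k ^ (θ + 1) * A1 θ lam) ^ (1 - 1/q) * (k ^ (θ + 1) *
            (|f' (m * x)| ^ q * A2 α θ lam + m * |f' b| ^ q * A3 α θ lam)) ^ (1/q)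
          = m ^ (θ + 1) * (b - x) ^ (θ + 1) * A1 θ lam ^ (1 - 1/q) *
            (|f' (m * x)| ^ q * A2 α θ lam + m * |f' b| ^ q * A3 α θ lam) ^ (1/q) := by
        rw [Real.mul_rpow hKnn hA1nn, Real.mul_rpow hKnn hB2nn]
        calc (k ^ (θ + 1)) ^ (1 - 1/q) * A1 θ lam ^ (1 - 1/q) *
              ((k ^ (θ + 1)) ^ (1/q) *
                (|f' (m * x)| ^ q * A2 α θ lam + m * |f' b| ^ q * A3 α θ lam) ^ (1/q))
            = ((k ^ (θ + 1)) ^ (1 - 1/q) * (k ^ (θ + 1)) ^ (1/q)) *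
              (A1 θ lam ^ (1 - 1/q) *
                (|f' (m * x)| ^ q * A2 α θ lam + m * |f' b| ^ q * A3 α θ lam) ^ (1/q)) := by
              ring
          _ = _ := by rw [h2, hkk]; ring
      calc |∫ t in (m * x)..(m * b), ((m * b - t) ^ θ - lam * k ^ θ) * f' t|
          ≤ ∫ t in (m * x)..(m * b), |(m * b - t) ^ θ - lam * k ^ θ| * |f' t| := hstepA
        _ ≤ _ := by rw [← hcomb]; exact hB
  -- assemble
  rw [Sf_eq hm0 hab hθ hax hxb hf' hint]
  have hpos : (0:ℝ) < 1 / (m * (b - a)) := by positivity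
  have habs : |1 / (m * (b - a)) *
        ((∫ t in (m * a)..(m * x), ((t - m * a) ^ θ - lam * (m * x - m * a) ^ θ) * f' t)
          - ∫ t in (m * x)..(m * b), ((m * b - t) ^ θ - lam * (m * b - m * x) ^ θ) * f' t)|
      ≤ 1 / (m * (b - a)) *
        (|∫ t in (m * a)..(m * x), ((t - m * a) ^ θ - lam * (m * x - m * a) ^ θ) * f' t|
          + |∫ t in (m * x)..(m * b), ((m * b - t) ^ θ - lam * (m * b - m * x) ^ θ) * f' t|) := by
    rw [abs_mul, abs_of_pos hpos]
    exact mul_le_mul_of_nonneg_left (abs_sub _ _) hpos.le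
  refine le_trans habs ?_
  have hfin : 1 / (m * (b - a)) *
        ((m ^ (θ + 1) * (x - a) ^ (θ + 1) * A1 θ lam ^ (1 - 1/q) *
          (|f' (m * x)| ^ q * A2 α θ lam + m * |f' a| ^ q * A3 α θ lam) ^ (1/q))
        + (m ^ (θ + 1) * (b - x) ^ (θ + 1) * A1 θ lam ^ (1 - 1/q) *
          (|f' (m * x)| ^ q * A2 α θ lam + m * |f' b| ^ q * A3 α θ lam) ^ (1/q)))
      = m ^ θ * (A1 θ lam) ^ (1 - 1 / q) / (b - a) *
          ((x - a) ^ (θ + 1) *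
              (|f' (m * x)| ^ q * A2 α θ lam + m * |f' a| ^ q * A3 α θ lam) ^ (1 / q) +
            (b - x) ^ (θ + 1) *
              (|f' (m * x)| ^ q * A2 α θ lam + m * |f' b| ^ q * A3 α θ lam) ^ (1 / q)) := by
    rw [Real.rpow_add_one (ne_of_gt hm0)]
    field_simp
  rw [← hfin]
  apply mul_le_mul_of_nonneg_left _ hpos.le
  exact add_le_add hS1 hS2
end

section
/- Let f : I ⊂ [0,∞) → ℝ be differentiable on I°, m ∈ (0,1], ma, b ∈ I° with a < b, and suppose f' is integrable on [ma, mb]. If |f'|^q is (α,m)-convex on [ma,b] for some fixed q ≥ 1 and (α,m) ∈ [0,1]², then for every x ∈ [a,b] and λ ∈ [0,1]: |(1−λ) f(mx) + λ ((x−a) f(ma) + (b−x) f(mb))/(b−a) − (1/(m(b−a))) ∫_{ma}^{mb} f(t) dt| ≤ (m A₁(1,λ)^{1−1/q}/(b−a)) { (x−a)² (|f'(mx)|^q A₂(α,1,λ) + m |f'(a)|^q A₃(α,1,λ))^{1/q} + (b−x)² (|f'(mx)|^q A₂(α,1,λ) + m |f'(b)|^q A₃(α,1,λ))^{1/q} }.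 -/
open MeasureTheory Set intervalIntegral Real

lemma mul_rpow_self' {t e : ℝ} (ht : 0 ≤ t) (he : 0 ≤ e) : t * t ^ e = t ^ (e + 1) := by
  rcases eq_or_lt_of_le ht with h | h
  · rw [← h, Real.zero_rpow (by positivity : (0:ℝ) < e + 1).ne']
    simp
  · rw [Real.rpow_add_one h.ne', mul_comm]

lemma cont_rpow_const {α : ℝ} (hα : 0 ≤ α) : Continuous fun t : ℝ => t ^ α := by
  rw [continuous_iff_continuousAt]
  intro t
  exact Real.continuousAt_rpow_const t α (Or.inr hα)

lemma integral_abs_sub (lam : ℝ) (hlam : lam ∈ Set.Icc (0:ℝ) 1) :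
    ∫ t in (0:ℝ)..1, |t - lam| = A1 1 lam := by
  obtain ⟨h0, h1⟩ := hlam
  have i1 : ∫ t in (0:ℝ)..lam, |t - lam| = lam * lam - lam ^ 2 / 2 := by
    rw [integral_congr (g := fun t => lam - t) (fun t ht => ?_)]
    · rw [integral_sub intervalIntegrable_const intervalIntegrable_id, integral_id]
      simp
      try ring
    · rw [Set.uIcc_of_le h0] at ht
      rw [abs_sub_comm]
      exact abs_of_nonneg (by linarith [ht.2])
  have i2 : ∫ t in lam..(1:ℝ), |t - lam| = (1 ^ 2 - lam ^ 2) / 2 - lam * (1 - lam) := by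
    rw [integral_congr (g := fun t => t - lam) (fun t ht => ?_)]
    · rw [integral_sub intervalIntegrable_id intervalIntegrable_const, integral_id]
      simp
      try ring
    · rw [Set.uIcc_of_le h1] at ht
      exact abs_of_nonneg (by linarith [ht.1])
  have key := integral_add_adjacent_intervals (μ := volume)
    (a := (0:ℝ)) (b := lam) (c := 1) (f := fun t => |t - lam|)
    ((continuous_abs.comp (continuous_id.sub continuous_const)).intervalIntegrable _ _)
    ((continuous_abs.comp (continuous_id.sub continuous_const)).intervalIntegrable _ _)
  rw [← key, i1, i2, A1]
  rw [show (1 + 1/1 : ℝ) = ((2:ℕ):ℝ) by norm_num, Real.rpow_natCast]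
  ring

lemma integral_abs_sub_rpow (lam α : ℝ) (hlam : lam ∈ Set.Icc (0:ℝ) 1) (hα : 0 ≤ α) :
    ∫ t in (0:ℝ)..1, |t - lam| * t ^ α = A2 α 1 lam := by
  obtain ⟨h0, h1⟩ := hlam
  have hc1 : Continuous fun t : ℝ => lam * t ^ α := continuous_const.mul (cont_rpow_const hα)
  have hc2 : Continuous fun t : ℝ => t ^ (α + 1) := cont_rpow_const (by linarith)
  have hr1 : ∫ t in (0:ℝ)..lam, t ^ α = lam ^ (α + 1) / (α + 1) := by
    rw [integral_rpow (Or.inl (by linarith : (-1:ℝ) < α))]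
    rw [Real.zero_rpow (by positivity : (0:ℝ) < α + 1).ne']
    ring
  have hr1' : ∫ t in lam..(1:ℝ), t ^ α = (1 - lam ^ (α + 1)) / (α + 1) := by
    rw [integral_rpow (Or.inl (by linarith : (-1:ℝ) < α)), Real.one_rpow]
  have hr2 : ∫ t in (0:ℝ)..lam, t ^ (α + 1) = lam ^ (α + 2) / (α + 2) := by
    rw [integral_rpow (Or.inl (by linarith : (-1:ℝ) < α + 1))]
    rw [Real.zero_rpow (by positivity : (0:ℝ) < α + 1 + 1).ne']
    norm_num [show α + 1 + 1 = α + 2 by ring]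
  have hr2' : ∫ t in lam..(1:ℝ), t ^ (α + 1) = (1 - lam ^ (α + 2)) / (α + 2) := by
    rw [integral_rpow (Or.inl (by linarith : (-1:ℝ) < α + 1)), Real.one_rpow]
    norm_num [show α + 1 + 1 = α + 2 by ring]
  have i1 : ∫ t in (0:ℝ)..lam, |t - lam| * t ^ α
      = lam * (lam ^ (α + 1) / (α + 1)) - lam ^ (α + 2) / (α + 2) := by
    rw [integral_congr (g := fun t => lam * t ^ α - t ^ (α + 1)) (fun t ht => ?_)]
    · rw [integral_sub (hc1.intervalIntegrable _ _) (hc2.intervalIntegrable _ _),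
        intervalIntegral.integral_const_mul, hr1, hr2]
    · rw [Set.uIcc_of_le h0] at ht
      have : |t - lam| = lam - t := by
        rw [abs_sub_comm]; exact abs_of_nonneg (by linarith [ht.2])
      rw [this, sub_mul, mul_rpow_self' ht.1 hα]
  have i2 : ∫ t in lam..(1:ℝ), |t - lam| * t ^ α
      = (1 - lam ^ (α + 2)) / (α + 2) - lam * ((1 - lam ^ (α + 1)) / (α + 1)) := by
    rw [integral_congr (g := fun t => t ^ (α + 1) - lam * t ^ α) (fun t ht => ?_)]
    · rw [integral_sub (hc2.intervalIntegrable _ _) (hc1.intervalIntegrable _ _),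
        intervalIntegral.integral_const_mul, hr1', hr2']
    · rw [Set.uIcc_of_le h1] at ht
      have : |t - lam| = t - lam := abs_of_nonneg (by linarith [ht.1])
      rw [this, sub_mul, mul_rpow_self' (by linarith [ht.1] : (0:ℝ) ≤ t) hα]
  have key := integral_add_adjacent_intervals (μ := volume)
    (a := (0:ℝ)) (b := lam) (c := 1) (f := fun t => |t - lam| * t ^ α)
    (((continuous_abs.comp (continuous_id.sub continuous_const)).mul
      (cont_rpow_const hα)).intervalIntegrable _ _)
    (((continuous_abs.comp (continuous_id.sub continuous_const)).mul
      (cont_rpow_const hα)).intervalIntegrable _ _)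
  rw [← key, i1, i2, A2]
  rw [show (1 + (1 + α) / 1 : ℝ) = α + 2 by rw [div_one]; ring]
  have hL2 : lam ^ (α + 2) = lam * lam ^ (α + 1) := by
    rw [mul_rpow_self' h0 (by linarith), show α + 1 + 1 = α + 2 by ring]
  rw [hL2]
  have d1 : (α:ℝ) + 1 ≠ 0 := by positivity
  have d2 : (α:ℝ) + 2 ≠ 0 := by positivity
  field_simp
  ring

lemma side_id (f f' : ℝ → ℝ) (m x c lam : ℝ) (hm : 0 < m)
    (hf : ∀ y ∈ Set.uIcc (m * c) (m * x), HasDerivAt f (f' y) y)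
    (hint : IntervalIntegrable f' volume (m * c) (m * x)) :
    m * (x - c) ^ 2 * ∫ t in (0:ℝ)..1, (t - lam) * f' (m * (t * x + (1 - t) * c))
      = (x - c) * ((1 - lam) * f (m * x) + lam * f (m * c))
        - (1 / m) * ∫ s in (m * c)..(m * x), f s := by
  rcases eq_or_ne x c with hxc | hxc
  · subst hxc
    simp
  have hk : m * (x - c) ≠ 0 := by
    apply mul_ne_zero hm.ne'
    exact sub_ne_zero.mpr hxc
  set g : ℝ → ℝ := fun t => m * (x - c) * t + m * c with hg
  have hgc : Continuous g := (continuous_const.mul continuous_id).add continuous_const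
  have hgmem : ∀ t ∈ Set.uIcc (0:ℝ) 1, g t ∈ Set.uIcc (m * c) (m * x) := by
    intro t ht
    rw [Set.uIcc_of_le zero_le_one] at ht
    have h01 : (1 - t) + t = 1 := by ring
    have hmem := (convex_uIcc (m * c) (m * x)) (Set.left_mem_uIcc)
      (Set.right_mem_uIcc) (by linarith [ht.2] : (0:ℝ) ≤ 1 - t) ht.1 h01
    have hco : g t = (1 - t) • (m * c) + t • (m * x) := by
      simp only [g, smul_eq_mul]; ring
    rw [hco]; exact hmem
  have hgeq : ∀ t : ℝ, g t = m * (t * x + (1 - t) * c) := fun t => by simp only [g]; ring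
  have hv : ∀ t ∈ Set.uIcc (0:ℝ) 1,
      HasDerivAt (fun t => f (g t)) (m * (x - c) * f' (g t)) t := by
    intro t ht
    have hgd : HasDerivAt g (m * (x - c)) t := by
      exact (((hasDerivAt_id t).const_mul (m * (x - c))).add_const (m * c)).congr_deriv (mul_one _)
    have := (hf (g t) (hgmem t ht)).comp t hgd
    exact this.congr_deriv (mul_comm _ _)
  have hu : ∀ t ∈ Set.uIcc (0:ℝ) 1, HasDerivAt (fun t : ℝ => t - lam) 1 t := fun t _ => by
    simpa using (hasDerivAt_id t).sub_const lam
  -- integrability of t ↦ f' (g t) on [0,1]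
  have hint2 : IntervalIntegrable (fun t => m * (x - c) * f' (g t)) volume 0 1 := by
    have h1 : IntervalIntegrable (fun s => f' (s + m * c)) volume 0 (m * (x - c)) := by
      have := hint.comp_add_right (m * c)
      simpa [mul_sub] using this
    have h2 : IntervalIntegrable (fun t => f' (m * (x - c) * t + m * c)) volume 0 1 := by
      have := h1.comp_mul_left (c := m * (x - c))
      · rw [zero_div, div_self hk] at this
        simpa using this
    exact h2.const_mul _
  have hcont : ContinuousOn f (Set.uIcc (m * c) (m * x)) := by
    intro y hy
    exact (hf y hy).continuousAt.continuousWithinAt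
  -- integration by parts
  have parts := integral_mul_deriv_eq_deriv_mul (a := (0:ℝ)) (b := 1)
    (u := fun t : ℝ => t - lam) (v := fun t => f (g t))
    (u' := fun _ => 1) (v' := fun t => m * (x - c) * f' (g t))
    hu hv (intervalIntegrable_const) hint2
  -- change of variables for ∫ f ∘ g
  have cov : ∫ t in (0:ℝ)..1, f (g t) * (m * (x - c)) = ∫ s in (m * c)..(m * x), f s := by
    have h := integral_comp_mul_deriv' (a := (0:ℝ)) (b := 1) (f := g)
      (f' := fun _ => m * (x - c)) (g := f)
      (fun t ht => by exact (((hasDerivAt_id t).const_mul (m * (x - c))).add_const (m * c)).congr_deriv (mul_one _))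
      continuousOn_const
      (hcont.mono (by
        rintro y ⟨t, ht, rfl⟩
        exact hgmem t ht))
    have hg0 : g 0 = m * c := by simp [g]
    have hg1 : g 1 = m * x := by simp [g]; ring
    rw [hg0, hg1] at h
    simpa [Function.comp] using h
  have hfg : ∫ t in (0:ℝ)..1, f (g t)
      = (1 / (m * (x - c))) * ∫ s in (m * c)..(m * x), f s := by
    rw [← cov]
    rw [intervalIntegral.integral_mul_const]
    field_simp
  -- assemble
  have key : ∫ t in (0:ℝ)..1, (t - lam) * (m * (x - c) * f' (g t))
      = (1 - lam) * f (g 1) - (0 - lam) * f (g 0) - ∫ t in (0:ℝ)..1, f (g t) := by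
    rw [parts]
    simp
  have hg0 : g 0 = m * c := by simp [g]
  have hg1 : g 1 = m * x := by simp [g]; ring
  rw [hg0, hg1, hfg] at key
  have expand : (fun t => (t - lam) * (m * (x - c) * f' (g t)))
      = fun t => (m * (x - c)) * ((t - lam) * f' (m * (t * x + (1 - t) * c))) := by
    funext t
    rw [hgeq t]
    ring
  rw [expand, intervalIntegral.integral_const_mul] at key
  have : m * (x - c) ^ 2 * ∫ t in (0:ℝ)..1, (t - lam) * f' (m * (t * x + (1 - t) * c))
      = (x - c) * ((m * (x - c)) * ∫ t in (0:ℝ)..1, (t - lam) * f' (m * (t * x + (1 - t) * c))) := by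
    ring
  rw [this, key]
  field_simp
  ring

lemma side_est (H : ℝ → ℝ) (lam α q X Y M : ℝ)
    (hlam : lam ∈ Set.Icc (0:ℝ) 1) (hα : α ∈ Set.Icc (0:ℝ) 1) (hq : 1 ≤ q)
    (hX : 0 ≤ X) (hY : 0 ≤ Y) (hM0 : 0 < M) (hM1 : M ≤ 1)
    (hH : AEStronglyMeasurable H (volume.restrict (Set.Ioc (0:ℝ) 1)))
    (hHb : ∀ t ∈ Set.Icc (0:ℝ) 1, |H t| ^ q ≤ t ^ α * X + M * (1 - t ^ α) * Y) :
    |∫ t in (0:ℝ)..1, (t - lam) * H t|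
      ≤ (A1 1 lam) ^ (1 - 1/q) * (X * A2 α 1 lam + M * Y * A3 α 1 lam) ^ (1/q) := by
  have hq0 : (0:ℝ) < q := by linarith
  have hq0' : q ≠ 0 := hq0.ne'
  set W : ℝ → ℝ := fun t => |t - lam| with hW
  have hW0 : ∀ t, 0 ≤ W t := fun t => abs_nonneg _
  have hWcont : Continuous W := continuous_abs.comp (continuous_id.sub continuous_const)
  have hWle : ∀ t ∈ Set.Icc (0:ℝ) 1, W t ≤ 1 := by
    intro t ht
    exact abs_le.mpr ⟨by linarith [ht.1, hlam.2], by linarith [ht.2, hlam.1]⟩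
  set B : ℝ → ℝ := fun t => t ^ α * X + M * (1 - t ^ α) * Y with hB
  have hBcont : Continuous B := by
    apply Continuous.add
    · exact (cont_rpow_const hα.1).mul continuous_const
    · exact (continuous_const.mul (continuous_const.sub (cont_rpow_const hα.1))).mul
        continuous_const
  have hB0 : ∀ t ∈ Set.Icc (0:ℝ) 1, 0 ≤ B t := by
    intro t ht
    have h1 : 0 ≤ t ^ α := Real.rpow_nonneg ht.1 α
    have h2 : t ^ α ≤ 1 := Real.rpow_le_one ht.1 ht.2 hα.1
    have : 0 ≤ 1 - t ^ α := by linarith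
    positivity
  have hBle : ∀ t ∈ Set.Icc (0:ℝ) 1, B t ≤ X + M * Y := by
    intro t ht
    have h1 : 0 ≤ t ^ α := Real.rpow_nonneg ht.1 α
    have h2 : t ^ α ≤ 1 := Real.rpow_le_one ht.1 ht.2 hα.1
    simp only [B]
    nlinarith [mul_nonneg (by linarith : (0:ℝ) ≤ 1 - t ^ α) hX,
      mul_nonneg (mul_nonneg hM0.le hY) h1]
  have hHq0 : ∀ t, 0 ≤ |H t| ^ q := fun t => Real.rpow_nonneg (abs_nonneg _) q
  have habs : ∀ t, |H t| = (|H t| ^ q) ^ (1/q) := by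
    intro t
    rw [← Real.rpow_mul (abs_nonneg _), mul_one_div, div_self hq0', Real.rpow_one]
  have hHC : ∀ t ∈ Set.Icc (0:ℝ) 1, |H t| ≤ (X + M * Y) ^ (1/q) := by
    intro t ht
    rw [habs t]
    exact Real.rpow_le_rpow (hHq0 t) ((hHb t ht).trans (hBle t ht)) (by positivity)
  -- measurability of W * |H|^q
  have hHabs : AEStronglyMeasurable (fun t => |H t|) (volume.restrict (Set.Ioc (0:ℝ) 1)) := by
    simpa [Real.norm_eq_abs] using hH.norm
  have hHqm : AEStronglyMeasurable (fun t => |H t| ^ q)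
      (volume.restrict (Set.Ioc (0:ℝ) 1)) := by
    exact (hHabs.aemeasurable.pow aemeasurable_const).aestronglyMeasurable
  haveI : IsFiniteMeasure (volume.restrict (Set.Ioc (0:ℝ) 1)) := by
    constructor
    rw [Measure.restrict_apply_univ]
    exact measure_Ioc_lt_top
  -- integrability of W * |H|^q on [0,1]
  have intWHq : IntervalIntegrable (fun t => W t * |H t| ^ q) volume 0 1 := by
    rw [intervalIntegrable_iff_integrableOn_Ioc_of_le zero_le_one]
    apply Integrable.mono' (integrable_const (X + M * Y))
    · exact hWcont.aestronglyMeasurable.mul hHqm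
    · refine (ae_restrict_iff' measurableSet_Ioc).mpr (ae_of_all _ fun t ht => ?_)
      have ht' : t ∈ Set.Icc (0:ℝ) 1 := Ioc_subset_Icc_self ht
      rw [Real.norm_eq_abs, abs_of_nonneg (mul_nonneg (hW0 t) (hHq0 t))]
      calc W t * |H t| ^ q ≤ 1 * (X + M * Y) :=
            mul_le_mul (hWle t ht') ((hHb t ht').trans (hBle t ht')) (hHq0 t) zero_le_one
        _ = X + M * Y := one_mul _
  have intWB : IntervalIntegrable (fun t => W t * B t) volume 0 1 :=
    (hWcont.mul hBcont).intervalIntegrable _ _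
  -- step 3 : J ≤ ∫ W B = X A2 + M Y A3
  set J : ℝ := ∫ t in (0:ℝ)..1, W t * |H t| ^ q with hJ
  have hJ0 : 0 ≤ J := intervalIntegral.integral_nonneg zero_le_one
      (fun t _ => mul_nonneg (hW0 t) (hHq0 t))
  have hWB : ∫ t in (0:ℝ)..1, W t * B t = X * A2 α 1 lam + M * Y * A3 α 1 lam := by
    have e : (fun t => W t * B t)
        = fun t => X * (W t * t ^ α) + (M * Y) * (W t - W t * t ^ α) := by
      funext t; simp only [W, B]; ring
    rw [e]
    have int1 : IntervalIntegrable (fun t : ℝ => W t * t ^ α) volume 0 1 :=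
      (hWcont.mul (cont_rpow_const hα.1)).intervalIntegrable _ _
    have int2 : IntervalIntegrable (fun t : ℝ => W t - W t * t ^ α) volume 0 1 :=
      (hWcont.sub (hWcont.mul (cont_rpow_const hα.1))).intervalIntegrable _ _
    rw [integral_add (int1.const_mul _) (int2.const_mul _), intervalIntegral.integral_const_mul,
      intervalIntegral.integral_const_mul, integral_sub (hWcont.intervalIntegrable _ _) int1,
      integral_abs_sub lam hlam, integral_abs_sub_rpow lam α hlam hα.1, A3]
  have h3 : J ≤ X * A2 α 1 lam + M * Y * A3 α 1 lam := by
    rw [← hWB]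
    apply intervalIntegral.integral_mono_on zero_le_one intWHq intWB
    intro t ht
    exact mul_le_mul_of_nonneg_left (hHb t ht) (hW0 t)
  -- step 1 : abs into the integral
  have h1 : |∫ t in (0:ℝ)..1, (t - lam) * H t| ≤ ∫ t in (0:ℝ)..1, W t * |H t| := by
    have := intervalIntegral.norm_integral_le_integral_norm
      (f := fun t => (t - lam) * H t) (μ := volume) (a := (0:ℝ)) (b := 1) zero_le_one
    simpa [Real.norm_eq_abs, abs_mul] using this
  -- step 2 : power mean / Hölder
  have h2 : ∫ t in (0:ℝ)..1, W t * |H t| ≤ (∫ t in (0:ℝ)..1, W t) ^ (1 - 1/q) * J ^ (1/q) := by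
    rcases eq_or_lt_of_le hq with hq1 | hq1
    · -- q = 1
      subst hq1
      rw [show (1:ℝ) - 1/1 = 0 by norm_num, show (1:ℝ)/1 = 1 by norm_num, Real.rpow_zero,
        Real.rpow_one, one_mul, hJ]
      apply le_of_eq
      simp [Real.rpow_one]
    · -- 1 < q
      set p : ℝ := q / (q - 1) with hp
      have hq1' : (0:ℝ) < q - 1 := by linarith
      have hp1 : 1 < p := by rw [lt_div_iff₀ hq1']; linarith
      have hpq : Real.HolderConjugate p q := by
        rw [Real.holderConjugate_iff]
        constructor
        · exact hp1
        · rw [hp]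
          field_simp
          ring
      have hexp : (0:ℝ) ≤ 1 - 1/q := by
        rw [sub_nonneg, div_le_one hq0]; exact hq
      have hexp2 : (0:ℝ) ≤ 1/q := by positivity
      set F : ℝ → ℝ := fun t => W t ^ (1 - 1/q) with hF
      set G : ℝ → ℝ := fun t => W t ^ (1/q) * |H t| with hG
      have hFcont : Continuous F := hWcont.rpow_const (fun t => Or.inr hexp)
      have hGmeas : AEStronglyMeasurable G (volume.restrict (Set.Ioc (0:ℝ) 1)) :=
        (hWcont.rpow_const (fun t => Or.inr hexp2)).aestronglyMeasurable.mul hHabs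
      have hf_mem : MemLp F (ENNReal.ofReal p) (volume.restrict (Set.Ioc (0:ℝ) 1)) := by
        apply MemLp.of_bound hFcont.aestronglyMeasurable 1
        refine (ae_restrict_iff' measurableSet_Ioc).mpr (Filter.Eventually.of_forall
          fun t ht => ?_)
        rw [Real.norm_eq_abs, abs_of_nonneg (Real.rpow_nonneg (hW0 t) _)]
        exact Real.rpow_le_one (hW0 t) (hWle t (Ioc_subset_Icc_self ht)) hexp
      have hg_mem : MemLp G (ENNReal.ofReal q) (volume.restrict (Set.Ioc (0:ℝ) 1)) := by
        apply MemLp.of_bound hGmeas ((X + M * Y) ^ (1/q))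
        refine (ae_restrict_iff' measurableSet_Ioc).mpr (Filter.Eventually.of_forall
          fun t ht => ?_)
        have ht' : t ∈ Set.Icc (0:ℝ) 1 := Ioc_subset_Icc_self ht
        rw [Real.norm_eq_abs, abs_of_nonneg (mul_nonneg (Real.rpow_nonneg (hW0 t) _)
          (abs_nonneg _))]
        calc W t ^ (1/q) * |H t| ≤ 1 * ((X + M * Y) ^ (1/q)) := by
              apply mul_le_mul (Real.rpow_le_one (hW0 t) (hWle t ht') hexp2) (hHC t ht')
                (abs_nonneg _) zero_le_one
          _ = (X + M * Y) ^ (1/q) := one_mul _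
      have holder := MeasureTheory.integral_mul_le_Lp_mul_Lq_of_nonneg hpq
        (μ := volume.restrict (Set.Ioc (0:ℝ) 1))
        (Filter.Eventually.of_forall fun t => Real.rpow_nonneg (hW0 t) _)
        (Filter.Eventually.of_forall fun t =>
          mul_nonneg (Real.rpow_nonneg (hW0 t) _) (abs_nonneg _))
        hf_mem hg_mem
      have epf : ∀ t : ℝ, F t * G t = W t * |H t| := by
        intro t
        simp only [F, G]
        rw [← mul_assoc, ← Real.rpow_add' (hW0 t) (by rw [sub_add_cancel]; exact one_ne_zero),
          sub_add_cancel, Real.rpow_one]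
      have epp : ∀ t : ℝ, F t ^ p = W t := by
        intro t
        simp only [F]
        rw [← Real.rpow_mul (hW0 t), show (1 - 1/q) * p = 1 by rw [hp]; field_simp,
          Real.rpow_one]
      have epq : ∀ t : ℝ, G t ^ q = W t * |H t| ^ q := by
        intro t
        simp only [G]
        rw [Real.mul_rpow (Real.rpow_nonneg (hW0 t) _) (abs_nonneg _),
          ← Real.rpow_mul (hW0 t), one_div, inv_mul_cancel₀ hq0', Real.rpow_one]
      have hpinv : 1/p = 1 - 1/q := by
        rw [hp, one_div_div, sub_div, div_self hq0']
      simp only [F, G] at epf epp epq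
      simp only [epf, epp, epq, hpinv] at holder
      calc ∫ t in (0:ℝ)..1, W t * |H t|
          = ∫ t in Set.Ioc (0:ℝ) 1, W t * |H t| := by
            rw [intervalIntegral.integral_of_le zero_le_one]
        _ ≤ (∫ t in Set.Ioc (0:ℝ) 1, W t) ^ (1 - 1/q)
            * (∫ t in Set.Ioc (0:ℝ) 1, W t * |H t| ^ q) ^ (1/q) := holder
        _ = (∫ t in (0:ℝ)..1, W t) ^ (1 - 1/q) * J ^ (1/q) := by
            rw [hJ, intervalIntegral.integral_of_le zero_le_one,
              intervalIntegral.integral_of_le zero_le_one]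
  -- assemble
  have hA1v : ∫ t in (0:ℝ)..1, W t = A1 1 lam := integral_abs_sub lam hlam
  have hA1nn : 0 ≤ A1 1 lam := by
    rw [← hA1v]
    exact intervalIntegral.integral_nonneg zero_le_one (fun t _ => hW0 t)
  rw [hA1v] at h2
  have h4 : J ^ (1/q) ≤ (X * A2 α 1 lam + M * Y * A3 α 1 lam) ^ (1/q) :=
    Real.rpow_le_rpow hJ0 h3 (by positivity)
  exact h1.trans (h2.trans (mul_le_mul_of_nonneg_left h4 (Real.rpow_nonneg hA1nn _)))


theorem powmean_theta_one
    (I : Set ℝ) (hI : Set.OrdConnected I) (hI0 : I ⊆ Set.Ici (0:ℝ)) (f f' : ℝ → ℝ) (m a b : ℝ)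
    (hm : m ∈ Set.Ioc (0:ℝ) 1) (hab : a < b)
    (hma : m * a ∈ interior I) (hb : b ∈ interior I)
    (hf : ∀ y ∈ interior I, HasDerivAt f (f' y) y)
    (hint : IntervalIntegrable f' MeasureTheory.volume (m * a) (m * b))
    (α q : ℝ) (hα : α ∈ Set.Icc (0:ℝ) 1) (hq : 1 ≤ q)
    (hconv : AlphaMConvexOn α m (m * a) b (fun u => |f' u| ^ q)) :
    ∀ x ∈ Set.Icc a b, ∀ lam ∈ Set.Icc (0:ℝ) 1,
      |(1 - lam) * f (m * x) +
          lam * (((x - a) * f (m * a) + (b - x) * f (m * b)) / (b - a)) -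
          (1 / (m * (b - a))) * ∫ t in (m * a)..(m * b), f t| ≤
        m * (A1 1 lam) ^ (1 - 1 / q) / (b - a) *
          ((x - a) ^ 2 *
              (|f' (m * x)| ^ q * A2 α 1 lam + m * |f' a| ^ q * A3 α 1 lam) ^ (1 / q) +
            (b - x) ^ 2 *
              (|f' (m * x)| ^ q * A2 α 1 lam + m * |f' b| ^ q * A3 α 1 lam) ^ (1 / q)) := by
  intro x hx lam hlam
  obtain ⟨hm0, hm1⟩ := hm
  obtain ⟨hxa, hxb⟩ := hx
  obtain ⟨hα0, hα1⟩ := hα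
  have hba : (0:ℝ) < b - a := by linarith
  have hma0 : (0:ℝ) ≤ m * a := hI0 (interior_subset hma)
  have ha0 : (0:ℝ) ≤ a := by nlinarith
  have hx0 : (0:ℝ) ≤ x := le_trans ha0 hxa
  have hb0 : (0:ℝ) ≤ b := by linarith
  have hIint : Set.OrdConnected (interior I) := hI.interior
  have hmab : m * a ≤ b := by nlinarith
  have hsub : Set.Icc (m * a) b ⊆ interior I := hIint.out hma hb
  have hmx_mem : m * x ∈ Set.Icc (m * a) b := ⟨by nlinarith, by nlinarith⟩
  have hmb_mem : m * b ∈ Set.Icc (m * a) b := ⟨by nlinarith, by nlinarith⟩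
  have ha_mem : a ∈ Set.Icc (m * a) b := ⟨by nlinarith, by linarith⟩
  have hb_mem : b ∈ Set.Icc (m * a) b := ⟨hmab, le_rfl⟩
  have segmem : ∀ c ∈ Set.Icc a b, ∀ t ∈ Set.Icc (0:ℝ) 1,
      m * (t * x + (1 - t) * c) ∈ Set.Icc (m * a) b := by
    intro c hc t ht
    have h1t : (0:ℝ) ≤ 1 - t := by linarith [ht.2]
    have hcomb1 : a ≤ t * x + (1 - t) * c := by
      nlinarith [mul_nonneg ht.1 (sub_nonneg.mpr hxa), mul_nonneg h1t (sub_nonneg.mpr hc.1)]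
    have hcomb2 : t * x + (1 - t) * c ≤ b := by
      nlinarith [mul_nonneg ht.1 (sub_nonneg.mpr hxb), mul_nonneg h1t (sub_nonneg.mpr hc.2)]
    constructor
    · exact mul_le_mul_of_nonneg_left hcomb1 hm0.le
    · calc m * (t * x + (1 - t) * c) ≤ 1 * (t * x + (1 - t) * c) :=
            mul_le_mul_of_nonneg_right hm1 (by linarith)
        _ ≤ b := by linarith
  have hfseg : ∀ y ∈ Set.Icc (m * a) b, HasDerivAt f (f' y) y := fun y hy => hf y (hsub hy)
  have hmax : m * a ≤ m * x := mul_le_mul_of_nonneg_left hxa hm0.le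
  have hmxb : m * x ≤ m * b := mul_le_mul_of_nonneg_left hxb hm0.le
  have hmamb : m * a ≤ m * b := le_trans hmax hmxb
  have huiA : Set.uIcc (m * a) (m * x) ⊆ Set.Icc (m * a) b := by
    rw [Set.uIcc_of_le hmax]
    exact Set.Icc_subset_Icc le_rfl hmx_mem.2
  have huiB : Set.uIcc (m * b) (m * x) ⊆ Set.Icc (m * a) b := by
    rw [Set.uIcc_of_ge hmxb]
    exact Set.Icc_subset_Icc hmx_mem.1 hmb_mem.2
  have hint1 : IntervalIntegrable f' volume (m * a) (m * x) := by
    apply hint.mono_set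
    rw [Set.uIcc_of_le hmax, Set.uIcc_of_le hmamb]
    exact Set.Icc_subset_Icc le_rfl hmxb
  have hint2 : IntervalIntegrable f' volume (m * b) (m * x) := by
    apply hint.mono_set
    rw [Set.uIcc_of_ge hmxb, Set.uIcc_of_le hmamb]
    exact Set.Icc_subset_Icc hmax le_rfl
  have idA := side_id f f' m x a lam hm0 (fun y hy => hfseg y (huiA hy)) hint1
  have idB := side_id f f' m x b lam hm0 (fun y hy => hfseg y (huiB hy)) hint2
  set Ia : ℝ := ∫ t in (0:ℝ)..1, (t - lam) * f' (m * (t * x + (1 - t) * a)) with hIa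
  set Ib : ℝ := ∫ t in (0:ℝ)..1, (t - lam) * f' (m * (t * x + (1 - t) * b)) with hIb
  -- split the integral of f
  have hfc : ContinuousOn f (Set.Icc (m * a) (m * b)) := fun y hy =>
    (hfseg y (Set.Icc_subset_Icc le_rfl hmb_mem.2 hy)).continuousAt.continuousWithinAt
  have hfi1 : IntervalIntegrable f volume (m * a) (m * x) :=
    (hfc.mono (by rw [Set.uIcc_of_le hmax]; exact Set.Icc_subset_Icc le_rfl hmxb)).intervalIntegrable
  have hfi2 : IntervalIntegrable f volume (m * x) (m * b) :=
    (hfc.mono (by rw [Set.uIcc_of_le hmxb]; exact Set.Icc_subset_Icc hmax le_rfl)).intervalIntegrable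
  have split := intervalIntegral.integral_add_adjacent_intervals (μ := volume) hfi1 hfi2
  have hsymm : ∫ s in (m * b)..(m * x), f s = -∫ s in (m * x)..(m * b), f s :=
    intervalIntegral.integral_symm _ _
  -- the key identity
  have hS : (1 - lam) * f (m * x) +
      lam * (((x - a) * f (m * a) + (b - x) * f (m * b)) / (b - a)) -
      (1 / (m * (b - a))) * ∫ t in (m * a)..(m * b), f t
      = (1 / (b - a)) * ((m * (x - a) ^ 2 * Ia) - (m * (x - b) ^ 2 * Ib)) := by
    rw [idA, idB, hsymm, ← split]
    field_simp
    ring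
  rw [hS]
  -- estimates for Ia and Ib
  have haesm : ∀ c ∈ Set.Icc a b, AEStronglyMeasurable
      (fun t => f' (m * (t * x + (1 - t) * c))) (volume.restrict (Set.Ioc (0:ℝ) 1)) := by
    intro c hc
    have hmeasg : Measurable fun t : ℝ => m * (t * x + (1 - t) * c) := by
      apply Measurable.const_mul
      exact (measurable_id.mul_const x).add ((measurable_const.sub measurable_id).mul_const c)
    apply AEStronglyMeasurable.congr
      (((measurable_deriv f).comp hmeasg).aestronglyMeasurable)
    refine (ae_restrict_iff' measurableSet_Ioc).mpr (Filter.Eventually.of_forall fun t ht => ?_)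
    have hy : m * (t * x + (1 - t) * c) ∈ interior I :=
      hsub (segmem c hc t (Set.Ioc_subset_Icc_self ht))
    exact (hf _ hy).deriv
  have hbnd : ∀ c ∈ Set.Icc a b, ∀ t ∈ Set.Icc (0:ℝ) 1,
      |f' (m * (t * x + (1 - t) * c))| ^ q
        ≤ t ^ α * |f' (m * x)| ^ q + m * (1 - t ^ α) * |f' c| ^ q := by
    intro c hc t ht
    have hcc : c ∈ Set.Icc (m * a) b := ⟨by nlinarith [hc.1], hc.2⟩
    have hmem' : t * (m * x) + m * (1 - t) * c ∈ Set.Icc (m * a) b := by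
      rw [show t * (m * x) + m * (1 - t) * c = m * (t * x + (1 - t) * c) by ring]
      exact segmem c hc t ht
    have := hconv (m * x) hmx_mem c hcc t ht hmem'
    rw [show t * (m * x) + m * (1 - t) * c = m * (t * x + (1 - t) * c) by ring] at this
    exact this
  have estA : |Ia| ≤ (A1 1 lam) ^ (1 - 1/q) *
      (|f' (m * x)| ^ q * A2 α 1 lam + m * |f' a| ^ q * A3 α 1 lam) ^ (1/q) := by
    have h := side_est (fun t => f' (m * (t * x + (1 - t) * a))) lam α q
      (|f' (m * x)| ^ q) (|f' a| ^ q) m hlam ⟨hα0, hα1⟩ hq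
      (Real.rpow_nonneg (abs_nonneg _) q) (Real.rpow_nonneg (abs_nonneg _) q) hm0 hm1
      (haesm a ⟨le_rfl, hab.le⟩) (hbnd a ⟨le_rfl, hab.le⟩)
    rw [show m * |f' a| ^ q * A3 α 1 lam = m * (|f' a| ^ q) * A3 α 1 lam by ring]
    exact h
  have estB : |Ib| ≤ (A1 1 lam) ^ (1 - 1/q) *
      (|f' (m * x)| ^ q * A2 α 1 lam + m * |f' b| ^ q * A3 α 1 lam) ^ (1/q) := by
    have h := side_est (fun t => f' (m * (t * x + (1 - t) * b))) lam α q
      (|f' (m * x)| ^ q) (|f' b| ^ q) m hlam ⟨hα0, hα1⟩ hq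
      (Real.rpow_nonneg (abs_nonneg _) q) (Real.rpow_nonneg (abs_nonneg _) q) hm0 hm1
      (haesm b ⟨hab.le, le_rfl⟩) (hbnd b ⟨hab.le, le_rfl⟩)
    rw [show m * |f' b| ^ q * A3 α 1 lam = m * (|f' b| ^ q) * A3 α 1 lam by ring]
    exact h
  -- final assembly
  calc |(1 / (b - a)) * ((m * (x - a) ^ 2 * Ia) - (m * (x - b) ^ 2 * Ib))|
      = (1 / (b - a)) * |(m * (x - a) ^ 2 * Ia) - (m * (x - b) ^ 2 * Ib)| := by
        rw [abs_mul, abs_of_nonneg (by positivity : (0:ℝ) ≤ 1 / (b - a))]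
    _ ≤ (1 / (b - a)) * (m * (x - a) ^ 2 * |Ia| + m * (x - b) ^ 2 * |Ib|) := by
        apply mul_le_mul_of_nonneg_left _ (by positivity)
        calc |(m * (x - a) ^ 2 * Ia) - (m * (x - b) ^ 2 * Ib)|
            ≤ |m * (x - a) ^ 2 * Ia| + |m * (x - b) ^ 2 * Ib| := by
              rw [sub_eq_add_neg]
              exact (abs_add_le _ _).trans (by rw [abs_neg])
          _ = m * (x - a) ^ 2 * |Ia| + m * (x - b) ^ 2 * |Ib| := by
              simp only [abs_mul, abs_of_nonneg hm0.le, abs_of_nonneg (sq_nonneg (x - a)),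
                abs_of_nonneg (sq_nonneg (x - b))]
    _ ≤ (1 / (b - a)) * (m * (x - a) ^ 2 *
          ((A1 1 lam) ^ (1 - 1/q) *
            (|f' (m * x)| ^ q * A2 α 1 lam + m * |f' a| ^ q * A3 α 1 lam) ^ (1/q))
        + m * (x - b) ^ 2 *
          ((A1 1 lam) ^ (1 - 1/q) *
            (|f' (m * x)| ^ q * A2 α 1 lam + m * |f' b| ^ q * A3 α 1 lam) ^ (1/q))) := by
        apply mul_le_mul_of_nonneg_left _ (by positivity)
        exact add_le_add (mul_le_mul_of_nonneg_left estA (by positivity))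
          (mul_le_mul_of_nonneg_left estB (by positivity))
    _ = m * (A1 1 lam) ^ (1 - 1 / q) / (b - a) *
          ((x - a) ^ 2 *
              (|f' (m * x)| ^ q * A2 α 1 lam + m * |f' a| ^ q * A3 α 1 lam) ^ (1 / q) +
            (b - x) ^ 2 *
              (|f' (m * x)| ^ q * A2 α 1 lam + m * |f' b| ^ q * A3 α 1 lam) ^ (1 / q)) := by
        rw [show (x - b) ^ 2 = (b - x) ^ 2 by ring]
        field_simp
end

section
/- Let f : I ⊂ [0,∞) → ℝ be differentiable on I°, m ∈ (0,1], ma, b ∈ I° with a < b, and suppose f' is integrable on [ma, mb]. If |f'| is (α,m)-convex on [ma,b] for some (α,m) ∈ [0,1]², then for every x ∈ [a,b], λ ∈ [0,1] and θ > 0: |S_f(mx,λ,θ,ma,mb)| ≤ (m^θ/(b−a)) { (x−a)^{θ+1} (|f'(mx)| A₂(α,θ,λ) + m |f'(a)| A₃(α,θ,λ)) + (b−x)^{θ+1} (|f'(mx)| A₂(α,θ,λ) + m |f'(b)| A₃(α,θ,λ)) }. -/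
open MeasureTheory Set intervalIntegral Real

lemma contw (θ lam : ℝ) (hθ : 0 < θ) : Continuous (fun t : ℝ => |t ^ θ - lam|) :=
  ((Real.continuous_rpow_const hθ.le).sub continuous_const).abs

lemma int_A2 (θ lam α : ℝ) (hθ : 0 < θ) (hα : 0 ≤ α) (hl0 : 0 ≤ lam) (hl1 : lam ≤ 1) :
    ∫ t in (0:ℝ)..1, |t ^ θ - lam| * t ^ α = A2 α θ lam := by
  have hα1 : (-1:ℝ) < α := by linarith
  have hθα : (-1:ℝ) < θ + α := by linarith
  have hiα : ∀ p q : ℝ, IntervalIntegrable (fun t : ℝ => |t ^ θ - lam| * t ^ α) volume p q :=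
    fun p q => (intervalIntegrable_rpow' hα1).continuousOn_mul (contw θ lam hθ).continuousOn
  set r := lam ^ (1/θ) with hrdef
  have hr0 : 0 ≤ r := Real.rpow_nonneg hl0 _
  have hr1 : r ≤ 1 := Real.rpow_le_one hl0 hl1 (by positivity)
  have hrθ : r ^ θ = lam := by
    rw [hrdef, ← Real.rpow_mul hl0]
    rw [one_div, inv_mul_cancel₀ hθ.ne', Real.rpow_one]
  -- split
  have hsplit : ∫ t in (0:ℝ)..1, |t ^ θ - lam| * t ^ α
      = (∫ t in (0:ℝ)..r, |t ^ θ - lam| * t ^ α) + ∫ t in r..1, |t ^ θ - lam| * t ^ α :=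
    (integral_add_adjacent_intervals (hiα 0 r) (hiα r 1)).symm
  have hI1 : ∫ t in (0:ℝ)..r, |t ^ θ - lam| * t ^ α
      = lam * (r ^ (α+1) / (α+1)) - r ^ (θ+α+1) / (θ+α+1) := by
    have hcg : ∀ t ∈ Set.uIcc (0:ℝ) r, |t ^ θ - lam| * t ^ α = lam * t ^ α - t ^ (θ+α) := by
      intro t ht
      rw [Set.uIcc_of_le hr0] at ht
      have h1 : t ^ θ ≤ lam := by
        rw [← hrθ]; exact Real.rpow_le_rpow ht.1 ht.2 hθ.le
      rw [abs_of_nonpos (by linarith), Real.rpow_add' ht.1 (by positivity)]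
      ring
    rw [intervalIntegral.integral_congr hcg, intervalIntegral.integral_sub
        (((intervalIntegrable_rpow' hα1).const_mul lam)) (intervalIntegrable_rpow' hθα),
      intervalIntegral.integral_const_mul, integral_rpow (Or.inl hα1), integral_rpow (Or.inl hθα),
      Real.zero_rpow (by positivity), Real.zero_rpow (by positivity)]
    ring
  have hI2 : ∫ t in r..(1:ℝ), |t ^ θ - lam| * t ^ α
      = (1 / (θ+α+1) - r ^ (θ+α+1) / (θ+α+1)) - lam * (1/(α+1) - r ^ (α+1) / (α+1)) := by
    have hcg : ∀ t ∈ Set.uIcc r (1:ℝ), |t ^ θ - lam| * t ^ α = t ^ (θ+α) - lam * t ^ α := by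
      intro t ht
      rw [Set.uIcc_of_le hr1] at ht
      have ht0 : 0 ≤ t := le_trans hr0 ht.1
      have h1 : lam ≤ t ^ θ := by
        rw [← hrθ]; exact Real.rpow_le_rpow hr0 ht.1 hθ.le
      rw [abs_of_nonneg (by linarith), Real.rpow_add' ht0 (by positivity)]
      ring
    rw [intervalIntegral.integral_congr hcg, intervalIntegral.integral_sub
        (intervalIntegrable_rpow' hθα) ((intervalIntegrable_rpow' hα1).const_mul lam),
      intervalIntegral.integral_const_mul, integral_rpow (Or.inl hα1), integral_rpow (Or.inl hθα),
      Real.one_rpow, Real.one_rpow]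
    ring
  set μ := lam ^ ((1+α)/θ) with hμdef
  have hμ1 : r ^ (α+1) = μ := by
    rw [hrdef, ← Real.rpow_mul hl0, hμdef]
    congr 1; field_simp; ring
  have hμ2 : r ^ (θ+α+1) = lam * μ := by
    rw [hrdef, ← Real.rpow_mul hl0]
    have he : 1/θ * (θ+α+1) = 1 + (1+α)/θ := by field_simp; ring
    rw [he, Real.rpow_add' hl0 (by positivity), Real.rpow_one]
  have hμ3 : lam ^ (1 + (1+α)/θ) = lam * μ := by
    rw [Real.rpow_add' hl0 (by positivity), Real.rpow_one]
  rw [hsplit, hI1, hI2, hμ1, hμ2]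
  unfold A2
  rw [hμ3]
  have h1 : α + 1 ≠ 0 := by positivity
  have h2 : α + θ + 1 ≠ 0 := by positivity
  have h3 : θ + α + 1 ≠ 0 := by positivity
  field_simp
  ring

lemma int_A1 (θ lam : ℝ) (hθ : 0 < θ) (hl0 : 0 ≤ lam) (hl1 : lam ≤ 1) :
    ∫ t in (0:ℝ)..1, |t ^ θ - lam| = A1 θ lam := by
  have h0 := int_A2 θ lam 0 hθ le_rfl hl0 hl1
  simp only [Real.rpow_zero, mul_one] at h0
  rw [h0]
  unfold A2 A1
  have h1 : θ + 1 ≠ 0 := by positivity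
  norm_num
  field_simp

lemma bound_E (g : ℝ → ℝ) (θ lam α m X Y : ℝ) (hθ : 0 < θ) (hα : 0 ≤ α)
    (hl0 : 0 ≤ lam) (hl1 : lam ≤ 1)
    (hg : IntervalIntegrable g volume 0 1)
    (hbd : ∀ t ∈ Set.Icc (0:ℝ) 1, |g t| ≤ t ^ α * X + m * (1 - t ^ α) * Y) :
    |∫ t in (0:ℝ)..1, (t ^ θ - lam) * g t| ≤ X * A2 α θ lam + m * Y * A3 α θ lam := by
  have hα1 : (-1:ℝ) < α := by linarith
  have hw : IntervalIntegrable (fun t : ℝ => |t ^ θ - lam|) volume 0 1 :=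
    (contw θ lam hθ).intervalIntegrable 0 1
  have hwα : IntervalIntegrable (fun t : ℝ => |t ^ θ - lam| * t ^ α) volume 0 1 :=
    (intervalIntegrable_rpow' hα1).continuousOn_mul (contw θ lam hθ).continuousOn
  have hi1 : IntervalIntegrable (fun t : ℝ => |t ^ θ - lam| * |g t|) volume 0 1 :=
    hg.abs.continuousOn_mul (contw θ lam hθ).continuousOn
  have hiR : IntervalIntegrable
      (fun t : ℝ => X * (|t ^ θ - lam| * t ^ α)
        + (m*Y) * (|t ^ θ - lam| - |t ^ θ - lam| * t ^ α)) volume 0 1 :=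
    (hwα.const_mul X).add ((hw.sub hwα).const_mul (m*Y))
  calc |∫ t in (0:ℝ)..1, (t ^ θ - lam) * g t|
      ≤ ∫ t in (0:ℝ)..1, |(t ^ θ - lam) * g t| :=
        intervalIntegral.abs_integral_le_integral_abs zero_le_one
    _ = ∫ t in (0:ℝ)..1, |t ^ θ - lam| * |g t| := by simp only [abs_mul]
    _ ≤ ∫ t in (0:ℝ)..1, X * (|t ^ θ - lam| * t ^ α)
        + (m*Y) * (|t ^ θ - lam| - |t ^ θ - lam| * t ^ α) := by
        apply intervalIntegral.integral_mono_on zero_le_one hi1 hiR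
        intro t ht
        have := mul_le_mul_of_nonneg_left (hbd t ht) (abs_nonneg (t ^ θ - lam))
        calc |t ^ θ - lam| * |g t| ≤ |t ^ θ - lam| * (t ^ α * X + m * (1 - t ^ α) * Y) := this
          _ = X * (|t ^ θ - lam| * t ^ α)
              + (m*Y) * (|t ^ θ - lam| - |t ^ θ - lam| * t ^ α) := by ring
    _ = X * A2 α θ lam + m * Y * A3 α θ lam := by
        rw [intervalIntegral.integral_add (hwα.const_mul X) ((hw.sub hwα).const_mul (m*Y)),
          intervalIntegral.integral_const_mul, intervalIntegral.integral_const_mul,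
          intervalIntegral.integral_sub hw hwα, int_A2 θ lam α hθ hα hl0 hl1,
          int_A1 θ lam hθ hl0 hl1]
        unfold A3
        ring

lemma key_ident (f f' : ℝ → ℝ) (P Q θ lam : ℝ) (hθ : 0 < θ)
    (hf : ∀ y ∈ Set.uIcc P Q, HasDerivAt f (f' y) y)
    (hint : IntervalIntegrable (fun t => f' (P + (Q - P) * t)) volume 0 1) :
    (Q - P) * ∫ t in (0:ℝ)..1, (t ^ θ - lam) * f' (P + (Q - P) * t) =
      (1 - lam) * f Q + lam * f P
        - θ * ∫ t in (0:ℝ)..1, t ^ (θ - 1) * f (P + (Q - P) * t) := by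
  set c := Q - P with hc
  set u : ℝ → ℝ := fun t => P + c * t with hu
  have humem : ∀ t ∈ Set.Icc (0:ℝ) 1, u t ∈ Set.uIcc P Q := by
    intro t ht
    have hut : u t = P + (Q - P) * t := rfl
    rcases le_total P Q with h | h
    · rw [Set.uIcc_of_le h, Set.mem_Icc, hut]
      constructor <;> nlinarith [ht.1, ht.2, sub_nonneg.mpr h]
    · rw [Set.uIcc_of_ge h, Set.mem_Icc, hut]
      constructor <;> nlinarith [ht.1, ht.2, sub_nonneg.mpr h]
  have hucont : Continuous u := by fun_prop
  have hfc : ContinuousOn f (Set.uIcc P Q) := fun y hy => (hf y hy).continuousAt.continuousWithinAt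
  have hfuc : ContinuousOn (fun t => f (u t)) (Set.Icc (0:ℝ) 1) :=
    hfc.comp hucont.continuousOn humem
  set Φ : ℝ → ℝ := fun t => (t ^ θ - lam) * f (u t) with hΦ
  set Φ' : ℝ → ℝ := fun t => θ * t ^ (θ - 1) * f (u t) + (t ^ θ - lam) * (f' (u t) * c) with hΦ'
  have hΦcont : ContinuousOn Φ (Set.Icc (0:ℝ) 1) :=
    (((Real.continuous_rpow_const hθ.le).sub continuous_const).continuousOn).mul hfuc
  have hΦderiv : ∀ t ∈ Set.Ioo (0:ℝ) 1, HasDerivAt Φ (Φ' t) t := by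
    intro t ht
    have h1 : HasDerivAt (fun t : ℝ => t ^ θ - lam) (θ * t ^ (θ - 1)) t :=
      (Real.hasDerivAt_rpow_const (Or.inl ht.1.ne')).sub_const lam
    have hu' : HasDerivAt u c t := by
      have := ((hasDerivAt_id t).const_mul c).const_add P
      simp only [id_eq, mul_one] at this
      exact this
    have h2 : HasDerivAt (fun t => f (u t)) (f' (u t) * c) t :=
      (hf (u t) (humem t (Set.mem_Icc_of_Ioo ht))).comp t hu'
    exact h1.mul h2
  have hint1 : IntervalIntegrable (fun t : ℝ => θ * t ^ (θ - 1) * f (u t)) volume 0 1 := by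
    apply IntervalIntegrable.mul_continuousOn
    · exact (intervalIntegrable_rpow' (by linarith)).const_mul θ
    · rw [Set.uIcc_of_le zero_le_one]
      exact hfuc
  have hint2 : IntervalIntegrable (fun t : ℝ => (t ^ θ - lam) * (f' (u t) * c)) volume 0 1 := by
    apply IntervalIntegrable.continuousOn_mul (hint.mul_const c)
    exact ((Real.continuous_rpow_const hθ.le).sub continuous_const).continuousOn
  have hftc : ∫ t in (0:ℝ)..1, Φ' t = Φ 1 - Φ 0 :=
    intervalIntegral.integral_eq_sub_of_hasDerivAt_of_le zero_le_one hΦcont hΦderiv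
      (hint1.add hint2)
  have hsplit : ∫ t in (0:ℝ)..1, Φ' t
      = θ * (∫ t in (0:ℝ)..1, t ^ (θ - 1) * f (u t))
        + c * ∫ t in (0:ℝ)..1, (t ^ θ - lam) * f' (u t) := by
    rw [show Φ' = fun t => θ * (t ^ (θ-1) * f (u t)) + c * ((t ^ θ - lam) * f' (u t)) by
      funext t; simp only [hΦ']; ring]
    rw [intervalIntegral.integral_add (by simpa [mul_assoc] using hint1)
        (by
          have : (fun t : ℝ => c * ((t ^ θ - lam) * f' (u t)))
              = fun t : ℝ => (t ^ θ - lam) * (f' (u t) * c) := by funext t; ring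
          rw [this]; exact hint2),
      intervalIntegral.integral_const_mul, intervalIntegral.integral_const_mul]
  have hΦ1 : Φ 1 = (1 - lam) * f Q := by
    simp only [hΦ, hu, Real.one_rpow, mul_one, hc]
    ring_nf
  have hΦ0 : Φ 0 = -lam * f P := by
    simp only [hΦ, hu, Real.zero_rpow hθ.ne', mul_zero, add_zero]
    ring
  rw [hsplit] at hftc
  rw [hΦ1, hΦ0] at hftc
  linarith [hftc]

lemma rpow_inv_collapse {c θ : ℝ} (hc : 0 < c) : c⁻¹ * (c ^ (θ - 1))⁻¹ = c ^ (-θ) := by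
  have h := (Real.rpow_pos_of_pos hc θ).ne'
  rw [Real.rpow_sub hc, Real.rpow_one, Real.rpow_neg hc.le]
  field_simp

lemma subst_pos (f : ℝ → ℝ) (P c θ : ℝ) (hc : 0 < c) :
    ∫ t in (0:ℝ)..1, t ^ (θ - 1) * f (P + c * t)
      = c ^ (-θ) * ∫ s in P..(P + c), (s - P) ^ (θ - 1) * f s := by
  have h1 := intervalIntegral.integral_comp_add_mul (a := (0:ℝ)) (b := 1)
    (f := fun s => ((s - P) / c) ^ (θ - 1) * f s) hc.ne' P
  simp only [add_sub_cancel_left, mul_div_cancel_left₀ _ hc.ne', mul_zero, add_zero, mul_one,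
    smul_eq_mul] at h1
  rw [h1]
  have h2 : ∫ s in P..(P + c), ((s - P) / c) ^ (θ - 1) * f s
      = (c ^ (θ - 1))⁻¹ * ∫ s in P..(P + c), (s - P) ^ (θ - 1) * f s := by
    rw [← intervalIntegral.integral_const_mul]
    apply intervalIntegral.integral_congr
    intro s hs
    dsimp only
    rw [Set.uIcc_of_le (by linarith)] at hs
    rw [Real.div_rpow (by linarith [hs.1]) hc.le]
    field_simp
  rw [h2, ← mul_assoc, rpow_inv_collapse hc]

lemma subst_neg (f : ℝ → ℝ) (P c θ : ℝ) (hc : c < 0) :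
    ∫ t in (0:ℝ)..1, t ^ (θ - 1) * f (P + c * t)
      = (-c) ^ (-θ) * ∫ s in (P + c)..P, (P - s) ^ (θ - 1) * f s := by
  have h1 := intervalIntegral.integral_comp_add_mul (a := (0:ℝ)) (b := 1)
    (f := fun s => ((s - P) / c) ^ (θ - 1) * f s) hc.ne P
  simp only [add_sub_cancel_left, mul_div_cancel_left₀ _ hc.ne, mul_zero, add_zero, mul_one,
    smul_eq_mul] at h1
  rw [h1, intervalIntegral.integral_symm]
  have h2 : ∫ s in (P + c)..P, ((s - P) / c) ^ (θ - 1) * f s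
      = ((-c) ^ (θ - 1))⁻¹ * ∫ s in (P + c)..P, (P - s) ^ (θ - 1) * f s := by
    rw [← intervalIntegral.integral_const_mul]
    apply intervalIntegral.integral_congr
    intro s hs
    dsimp only
    rw [Set.uIcc_of_le (by linarith)] at hs
    rw [show (s - P) / c = (P - s) / (-c) by ring,
      Real.div_rpow (by linarith [hs.2]) (by linarith)]
    field_simp
  rw [h2]
  have hc' : 0 < -c := by linarith
  rw [← rpow_inv_collapse hc']
  ring

lemma comp_affine (f' : ℝ → ℝ) (P Q : ℝ) (h : IntervalIntegrable f' volume P Q) :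
    IntervalIntegrable (fun t => f' (P + (Q - P) * t)) volume 0 1 := by
  rcases eq_or_ne Q P with h0 | h0
  · simp only [h0, sub_self, zero_mul, add_zero]
    exact intervalIntegrable_const
  · have h1 : IntervalIntegrable (fun s => f' (P + s)) volume 0 (Q - P) := by
      simpa using h.comp_add_left P
    have h2 := h1.comp_mul_left (c := Q - P)
    rw [zero_div, div_self (sub_ne_zero.mpr h0)] at h2
    exact h2

set_option maxHeartbeats 1000000 in
theorem powmean_q_one
    (I : Set ℝ) (hI : Set.OrdConnected I) (hI0 : I ⊆ Set.Ici (0:ℝ)) (f f' : ℝ → ℝ) (m a b : ℝ)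
    (hm : m ∈ Set.Ioc (0:ℝ) 1) (hab : a < b)
    (hma : m * a ∈ interior I) (hb : b ∈ interior I)
    (hf : ∀ y ∈ interior I, HasDerivAt f (f' y) y)
    (hint : IntervalIntegrable f' MeasureTheory.volume (m * a) (m * b))
    (α : ℝ) (hα : α ∈ Set.Icc (0:ℝ) 1)
    (hconv : AlphaMConvexOn α m (m * a) b (fun u => |f' u|)) :
    ∀ x ∈ Set.Icc a b, ∀ lam ∈ Set.Icc (0:ℝ) 1, ∀ θ : ℝ, 0 < θ →
      |Sf f m a b x lam θ| ≤
        m ^ θ / (b - a) *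
          ((x - a) ^ (θ + 1) *
              (|f' (m * x)| * A2 α θ lam + m * |f' a| * A3 α θ lam) +
            (b - x) ^ (θ + 1) *
              (|f' (m * x)| * A2 α θ lam + m * |f' b| * A3 α θ lam)) := by
  obtain ⟨hm0, hm1⟩ := hm
  obtain ⟨hα0, hα1⟩ := hα
  intro x hx lam hlam θ hθ
  obtain ⟨hax, hxb⟩ := hx
  obtain ⟨hl0, hl1⟩ := hlam
  have hba : 0 < b - a := by linarith
  have hma0 : (0:ℝ) ≤ m * a := hI0 (interior_subset hma)
  have ha0 : 0 ≤ a := by nlinarith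
  have hb0 : (0:ℝ) ≤ b := hI0 (interior_subset hb)
  have hx0 : 0 ≤ x := le_trans ha0 hax
  have hmaa : m * a ≤ a := by nlinarith
  have hmxx : m * x ≤ x := by nlinarith
  have hmbb : m * b ≤ b := by nlinarith
  have hmamx : m * a ≤ m * x := by nlinarith
  have hmxmb : m * x ≤ m * b := by nlinarith
  -- the closed interval [m*a, b] lies in the interior of I
  have hIccsub : Set.Icc (m * a) b ⊆ interior I := by
    rcases Metric.mem_nhds_iff.1 (mem_interior_iff_mem_nhds.1 hma) with ⟨ε, hε, hball⟩
    rcases Metric.mem_nhds_iff.1 (mem_interior_iff_mem_nhds.1 hb) with ⟨δ, hδ, hball'⟩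
    have hp : m * a - ε/2 ∈ I := by
      apply hball
      rw [Metric.mem_ball, Real.dist_eq]
      rw [abs_of_nonpos (by linarith)]
      linarith
    have hq : b + δ/2 ∈ I := by
      apply hball'
      rw [Metric.mem_ball, Real.dist_eq]
      rw [abs_of_nonneg (by linarith)]
      linarith
    have hss : Set.Icc (m * a - ε/2) (b + δ/2) ⊆ I := hI.out hp hq
    intro z hz
    rw [mem_interior]
    refine ⟨Set.Ioo (m * a - ε/2) (b + δ/2), subset_trans Set.Ioo_subset_Icc_self hss,
      isOpen_Ioo, ⟨by linarith [hz.1], by linarith [hz.2]⟩⟩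
  have hfd : ∀ y ∈ Set.Icc (m * a) b, HasDerivAt f (f' y) y := fun y hy => hf y (hIccsub hy)
  have hmxb : m * x ≤ b := le_trans hmxx hxb
  have hA : Set.uIcc (m * a) (m * x) ⊆ Set.Icc (m * a) b := by
    rw [Set.uIcc_of_le hmamx]; exact Set.Icc_subset_Icc le_rfl hmxb
  have hB : Set.uIcc (m * b) (m * x) ⊆ Set.Icc (m * a) b := by
    rw [Set.uIcc_of_ge hmxmb]; exact Set.Icc_subset_Icc hmamx hmbb
  have hintA : IntervalIntegrable f' volume (m * a) (m * x) := by
    apply hint.mono_set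
    rw [Set.uIcc_of_le hmamx, Set.uIcc_of_le (le_trans hmamx hmxmb)]
    exact Set.Icc_subset_Icc le_rfl hmxmb
  have hintB : IntervalIntegrable f' volume (m * b) (m * x) := by
    apply IntervalIntegrable.symm
    apply hint.mono_set
    rw [Set.uIcc_of_le hmxmb, Set.uIcc_of_le (le_trans hmamx hmxmb)]
    exact Set.Icc_subset_Icc hmamx le_rfl
  have hgA := comp_affine f' (m * a) (m * x) hintA
  have hgB := comp_affine f' (m * b) (m * x) hintB
  set EA := ∫ t in (0:ℝ)..1, (t ^ θ - lam) * f' (m * a + (m * x - m * a) * t) with hEA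
  set EB := ∫ t in (0:ℝ)..1, (t ^ θ - lam) * f' (m * b + (m * x - m * b) * t) with hEB
  have hkeyA := key_ident f f' (m * a) (m * x) θ lam hθ (fun y hy => hfd y (hA hy)) hgA
  have hkeyB := key_ident f f' (m * b) (m * x) θ lam hθ (fun y hy => hfd y (hB hy)) hgB
  have hΓθ : 0 < Real.Gamma θ := Real.Gamma_pos_of_pos hθ
  have hΓ1 : Real.Gamma (θ + 1) = θ * Real.Gamma θ := Real.Gamma_add_one hθ.ne'
  have hmθ : m ^ (θ - 1) = m ^ θ / m := by rw [Real.rpow_sub hm0, Real.rpow_one]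
  -- chunk A
  have hTA : m ^ θ * (x - a) ^ (θ + 1) / (b - a) * EA
      = m ^ (θ - 1) * ((x - a) ^ θ * ((1 - lam) * f (m * x) + lam * f (m * a))) / (b - a)
        - Real.Gamma (θ + 1) / (m * (b - a)) * rlLeft θ (m * a) (m * x) f := by
    rcases eq_or_lt_of_le hax with h | h
    · rw [← h]
      simp [rlLeft, sub_self, Real.zero_rpow hθ.ne', Real.zero_rpow (by positivity : θ + 1 ≠ 0)]
    · have hxa : 0 < x - a := by linarith
      have hcA : 0 < m * x - m * a := by nlinarith
      rw [subst_pos f (m * a) (m * x - m * a) θ hcA,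
        show m * a + (m * x - m * a) = m * x by ring] at hkeyA
      have hrlA : ∫ s in (m*a)..(m*x), (s - m*a) ^ (θ-1) * f s
          = Real.Gamma θ * rlLeft θ (m*a) (m*x) f := by
        rw [rlLeft]; field_simp
      have hcθ : (m*x - m*a) ^ θ = m ^ θ * (x-a) ^ θ := by
        rw [show m*x - m*a = m*(x-a) by ring, Real.mul_rpow hm0.le hxa.le]
      have hcneg : (m*x - m*a) ^ (-θ) = (m ^ θ * (x-a) ^ θ)⁻¹ := by
        rw [Real.rpow_neg hcA.le, hcθ]
      rw [hrlA, hcneg] at hkeyA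
      have hθp1 : (x-a) ^ (θ+1) = (x-a) ^ θ * (x-a) := by
        rw [Real.rpow_add hxa, Real.rpow_one]
      have hEAval : EA = ((1-lam) * f (m*x) + lam * f (m*a)
          - θ * ((m ^ θ * (x-a) ^ θ)⁻¹ * (Real.Gamma θ * rlLeft θ (m*a) (m*x) f)))
            / (m*x - m*a) := by
        rw [eq_div_iff hcA.ne']
        linear_combination hkeyA
      rw [hEAval, hΓ1, hmθ, hθp1]
      have hp0 : m ^ θ ≠ 0 := (Real.rpow_pos_of_pos hm0 θ).ne'
      have hq0 : (x-a) ^ θ ≠ 0 := (Real.rpow_pos_of_pos hxa θ).ne'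
      field_simp
  -- chunk B
  have hTB : m ^ θ * (b - x) ^ (θ + 1) / (b - a) * EB
      = -(m ^ (θ - 1) * ((b - x) ^ θ * ((1 - lam) * f (m * x) + lam * f (m * b))) / (b - a))
        + Real.Gamma (θ + 1) / (m * (b - a)) * rlRight θ (m * x) (m * b) f := by
    rcases eq_or_lt_of_le hxb with h | h
    · rw [h, rlRight, intervalIntegral.integral_same, mul_zero, mul_zero, sub_self,
        Real.zero_rpow hθ.ne', Real.zero_rpow (by positivity : θ + 1 ≠ 0)]
      ring
    · have hbx : 0 < b - x := by linarith
      have hcB : m * x - m * b < 0 := by nlinarith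
      rw [subst_neg f (m * b) (m * x - m * b) θ hcB,
        show m * b + (m * x - m * b) = m * x by ring] at hkeyB
      have hrlB : ∫ s in (m*x)..(m*b), (m*b - s) ^ (θ-1) * f s
          = Real.Gamma θ * rlRight θ (m*x) (m*b) f := by
        rw [rlRight]; field_simp
      have hcθ : (-(m*x - m*b)) ^ θ = m ^ θ * (b-x) ^ θ := by
        rw [show -(m*x - m*b) = m*(b-x) by ring, Real.mul_rpow hm0.le hbx.le]
      have hcneg : (-(m*x - m*b)) ^ (-θ) = (m ^ θ * (b-x) ^ θ)⁻¹ := by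
        rw [Real.rpow_neg (by linarith : (0:ℝ) ≤ -(m*x - m*b)), hcθ]
      rw [hrlB, hcneg] at hkeyB
      have hθp1 : (b-x) ^ (θ+1) = (b-x) ^ θ * (b-x) := by
        rw [Real.rpow_add hbx, Real.rpow_one]
      have hEBval : EB = ((1-lam) * f (m*x) + lam * f (m*b)
          - θ * ((m ^ θ * (b-x) ^ θ)⁻¹ * (Real.Gamma θ * rlRight θ (m*x) (m*b) f)))
            / (m*x - m*b) := by
        rw [eq_div_iff hcB.ne]
        linear_combination hkeyB
      rw [hEBval, hΓ1, hmθ, hθp1]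
      have hp0 : m ^ θ ≠ 0 := (Real.rpow_pos_of_pos hm0 θ).ne'
      have hq0 : (b-x) ^ θ ≠ 0 := (Real.rpow_pos_of_pos hbx θ).ne'
      have hcB' : m*x - m*b ≠ 0 := hcB.ne
      have hxb' : -b + x ≠ 0 := by intro h; linarith
      field_simp
      ring_nf
      have hinv : (-b + x) * (-b + x)⁻¹ = 1 := mul_inv_cancel₀ hxb'
      linear_combination (m ^ θ * (b - x) ^ θ * lam * f (x * m) - m ^ θ * (b - x) ^ θ * lam * f (b * m)
        - m ^ θ * (b - x) ^ θ * f (x * m) + θ * Gamma θ * rlRight θ (x * m) (b * m) f) * hinv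
  -- identity for Sf
  have hSf : Sf f m a b x lam θ
      = m ^ θ / (b - a) * ((x - a) ^ (θ + 1) * EA - (b - x) ^ (θ + 1) * EB) := by
    unfold Sf
    linear_combination hTB - hTA
  rw [hSf]
  -- bounds on EA and EB
  have hbEA : |EA| ≤ |f' (m * x)| * A2 α θ lam + m * |f' a| * A3 α θ lam := by
    apply bound_E _ θ lam α m _ _ hθ hα0 hl0 hl1 hgA
    intro t ht
    have harg : m * a + (m * x - m * a) * t = t * (m * x) + m * (1 - t) * a := by ring
    have hmem : t * (m * x) + m * (1 - t) * a ∈ Set.Icc (m * a) b := by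
      constructor
      · nlinarith [mul_nonneg ht.1 (sub_nonneg.mpr hmamx)]
      · nlinarith [mul_nonneg (sub_nonneg.mpr ht.2) (sub_nonneg.mpr hmamx)]
    have hcv := hconv (m * x) ⟨hmamx, hmxb⟩ a ⟨hmaa, hab.le⟩ t ht hmem
    rw [harg]
    simpa using hcv
  have hbEB : |EB| ≤ |f' (m * x)| * A2 α θ lam + m * |f' b| * A3 α θ lam := by
    apply bound_E _ θ lam α m _ _ hθ hα0 hl0 hl1 hgB
    intro t ht
    have harg : m * b + (m * x - m * b) * t = t * (m * x) + m * (1 - t) * b := by ring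
    have hmem : t * (m * x) + m * (1 - t) * b ∈ Set.Icc (m * a) b := by
      constructor
      · nlinarith [mul_nonneg (sub_nonneg.mpr ht.2) (sub_nonneg.mpr hmxmb),
          mul_nonneg ht.1 (sub_nonneg.mpr hmamx)]
      · nlinarith [mul_nonneg ht.1 (sub_nonneg.mpr hmxmb),
          mul_nonneg (sub_nonneg.mpr ht.2) (sub_nonneg.mpr hmxmb)]
    have hcv := hconv (m * x) ⟨hmamx, hmxb⟩ b ⟨by linarith, le_refl b⟩ t ht hmem
    rw [harg]
    simpa using hcv
  -- final estimate
  have hxa0 : (0:ℝ) ≤ (x - a) ^ (θ + 1) := Real.rpow_nonneg (by linarith) _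
  have hbx0 : (0:ℝ) ≤ (b - x) ^ (θ + 1) := Real.rpow_nonneg (by linarith) _
  have hcoef : (0:ℝ) < m ^ θ / (b - a) := div_pos (Real.rpow_pos_of_pos hm0 θ) hba
  rw [abs_mul, abs_of_pos hcoef]
  apply mul_le_mul_of_nonneg_left _ hcoef.le
  calc |(x - a) ^ (θ + 1) * EA - (b - x) ^ (θ + 1) * EB|
      ≤ |(x - a) ^ (θ + 1) * EA| + |(b - x) ^ (θ + 1) * EB| := abs_sub _ _
    _ = (x - a) ^ (θ + 1) * |EA| + (b - x) ^ (θ + 1) * |EB| := by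
        rw [abs_mul, abs_mul, abs_of_nonneg hxa0, abs_of_nonneg hbx0]
    _ ≤ (x - a) ^ (θ + 1) * (|f' (m * x)| * A2 α θ lam + m * |f' a| * A3 α θ lam)
        + (b - x) ^ (θ + 1) * (|f' (m * x)| * A2 α θ lam + m * |f' b| * A3 α θ lam) :=
        add_le_add (mul_le_mul_of_nonneg_left hbEA hxa0)
          (mul_le_mul_of_nonneg_left hbEB hbx0)
end

section
/- Let f : I ⊂ [0,∞) → ℝ be differentiable on I°, m ∈ (0,1], ma, b ∈ I° with a < b, and suppose f' is integrable on [ma, mb]. If |f'|^q is (α,m)-convex on [ma,b] for some fixed q ≥ 1 and (α,m) ∈ [0,1]², then for every θ > 0 the midpoint-type inequality holds: |f(m(a+b)/2) − (Γ(θ+1) 2^{θ−1}/(m^θ (b−a)^θ)) [J_{(m(a+b)/2)−}^θ f(ma) + J_{(m(a+b)/2)+}^θ f(mb)]| ≤ (m(b−a)/4) (1/(θ+1)) (1/(α+θ+1))^{1/q} { [(θ+1)|f'(m(a+b)/2)|^q + αm |f'(a)|^q]^{1/q} + [(θ+1)|f'(m(a+b)/2)|^q + αm |f'(b)|^q]^{1/q}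 }. -/
open MeasureTheory Set intervalIntegral Real

lemma comp_affine_integrable {f' : ℝ → ℝ} {c h : ℝ} (hh : h ≠ 0)
    (hint : IntervalIntegrable f' volume c (c + h)) :
    IntervalIntegrable (fun s => f' (c + s * h)) volume 0 1 := by
  have h1 := (hint.comp_add_left c).comp_mul_right (c := h)
  simpa [sub_self, zero_div, div_self hh, add_sub_cancel_left, mul_comm] using h1

lemma key_ftc {f f' : ℝ → ℝ} {θ c h : ℝ} (hθ : 0 < θ) (hh : h ≠ 0)
    (hder : ∀ x ∈ uIcc c (c + h), HasDerivAt f (f' x) x)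
    (hint : IntervalIntegrable (fun s => f' (c + s * h)) volume 0 1) :
    (∫ s in (0:ℝ)..1, (θ * (s ^ (θ - 1) * f (c + s * h)) + s ^ θ * (h * f' (c + s * h))))
      = f (c + h) := by
  have hmem : ∀ s ∈ Icc (0:ℝ) 1, c + s * h ∈ uIcc c (c + h) := by
    intro s hs
    rcases le_or_gt 0 h with h0 | h0
    · rw [uIcc_of_le (by linarith)]
      constructor <;> nlinarith [hs.1, hs.2]
    · rw [uIcc_of_ge (by linarith)]
      constructor <;> nlinarith [hs.1, hs.2]
  have h3 : ∀ s ∈ Icc (0:ℝ) 1, HasDerivAt (fun s => f (c + s * h)) (f' (c + s * h) * h) s := by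
    intro s hs
    have h2 : HasDerivAt (fun s : ℝ => c + s * h) h s := by
      simpa using ((hasDerivAt_id s).mul_const h).const_add c
    exact (hder _ (hmem s hs)).comp s h2
  have hcontf : ContinuousOn (fun s => f (c + s * h)) (Icc 0 1) := fun s hs =>
    (h3 s hs).continuousAt.continuousWithinAt
  have hcont : ContinuousOn (fun s => s ^ θ * f (c + s * h)) (Icc 0 1) :=
    ((Real.continuous_rpow_const hθ.le).continuousOn).mul hcontf
  have hderiv : ∀ s ∈ Ioo (0:ℝ) 1, HasDerivAt (fun s => s ^ θ * f (c + s * h))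
      (θ * (s ^ (θ - 1) * f (c + s * h)) + s ^ θ * (h * f' (c + s * h))) s := by
    intro s hs
    have h1 : HasDerivAt (fun s : ℝ => s ^ θ) (θ * s ^ (θ - 1)) s :=
      Real.hasDerivAt_rpow_const (Or.inl hs.1.ne')
    have : HasDerivAt (fun s => s ^ θ * f (c + s * h)) _ s := h1.mul (h3 s ⟨hs.1.le, hs.2.le⟩)
    convert this using 1
    ring
  have hint' : IntervalIntegrable
      (fun s => θ * (s ^ (θ - 1) * f (c + s * h)) + s ^ θ * (h * f' (c + s * h)))
      volume 0 1 := by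
    have i1 : IntervalIntegrable (fun s : ℝ => s ^ (θ - 1) * f (c + s * h)) volume 0 1 :=
      (intervalIntegrable_rpow' (by linarith)).mul_continuousOn
        (by rwa [uIcc_of_le (by norm_num : (0:ℝ) ≤ 1)])
    have i2 : IntervalIntegrable (fun s : ℝ => s ^ θ * (h * f' (c + s * h))) volume 0 1 :=
      (hint.const_mul h).continuousOn_mul
        ((Real.continuous_rpow_const hθ.le).continuousOn)
    exact (i1.const_mul θ).add i2
  have := integral_eq_sub_of_hasDerivAt_of_le (by norm_num)
    hcont hderiv hint'
  rw [this]
  rw [Real.one_rpow, Real.zero_rpow hθ.ne']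
  ring_nf


lemma subst_left (f : ℝ → ℝ) {θ c h : ℝ} (hh : 0 < h) :
    ∫ t in c..(c + h), (t - c) ^ (θ - 1) * f t
      = h * (h ^ (θ - 1) * ∫ s in (0:ℝ)..1, s ^ (θ - 1) * f (c + s * h)) := by
  have key := integral_comp_mul_add (a := (0:ℝ)) (b := 1)
    (fun t => (t - c) ^ (θ - 1) * f t) hh.ne' c
  rw [mul_zero, zero_add, mul_one] at key
  have congr1 : (∫ s in (0:ℝ)..1, (h * s + c - c) ^ (θ - 1) * f (h * s + c))
      = ∫ s in (0:ℝ)..1, h ^ (θ - 1) * (s ^ (θ - 1) * f (c + s * h)) := by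
    apply intervalIntegral.integral_congr
    intro s hs
    rw [uIcc_of_le (by norm_num : (0:ℝ) ≤ 1)] at hs
    show (h * s + c - c) ^ (θ - 1) * f (h * s + c) = h ^ (θ - 1) * (s ^ (θ - 1) * f (c + s * h))
    have e0 : h * s + c - c = h * s := by ring
    have e1 : h * s + c = c + s * h := by ring
    rw [e0, e1, Real.mul_rpow hh.le hs.1]
    ring
  rw [congr1, intervalIntegral.integral_const_mul, (by ring : h + c = c + h),
    smul_eq_mul] at key
  rw [key]
  field_simp

lemma subst_right (f : ℝ → ℝ) {θ d h : ℝ} (hh : 0 < h) :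
    ∫ t in (d - h)..d, (d - t) ^ (θ - 1) * f t
      = h * (h ^ (θ - 1) * ∫ s in (0:ℝ)..1, s ^ (θ - 1) * f (d - s * h)) := by
  have key := integral_comp_mul_add (a := (0:ℝ)) (b := 1)
    (fun t => (d - t) ^ (θ - 1) * f t) (neg_ne_zero.2 hh.ne') d
  rw [mul_zero, zero_add, mul_one] at key
  have congr1 : (∫ s in (0:ℝ)..1, (d - (-h * s + d)) ^ (θ - 1) * f (-h * s + d))
      = ∫ s in (0:ℝ)..1, h ^ (θ - 1) * (s ^ (θ - 1) * f (d - s * h)) := by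
    apply intervalIntegral.integral_congr
    intro s hs
    rw [uIcc_of_le (by norm_num : (0:ℝ) ≤ 1)] at hs
    show (d - (-h * s + d)) ^ (θ - 1) * f (-h * s + d) = h ^ (θ - 1) * (s ^ (θ - 1) * f (d - s * h))
    have e1 : d - (-h * s + d) = h * s := by ring
    have e2 : -h * s + d = d - s * h := by ring
    rw [e1, e2, Real.mul_rpow hh.le hs.1]
    ring
  rw [congr1, intervalIntegral.integral_const_mul] at key
  rw [(by ring : -h + d = d - h), intervalIntegral.integral_symm (d - h) d,
    smul_eq_mul] at key
  rw [key]
  field_simp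

lemma split_ftc {f f' : ℝ → ℝ} {θ c h : ℝ} (hθ : 0 < θ) (hh : h ≠ 0)
    (hder : ∀ x ∈ uIcc c (c + h), HasDerivAt f (f' x) x)
    (hint : IntervalIntegrable (fun s => f' (c + s * h)) volume 0 1) :
    θ * (∫ s in (0:ℝ)..1, s ^ (θ - 1) * f (c + s * h))
      + h * (∫ s in (0:ℝ)..1, s ^ θ * f' (c + s * h)) = f (c + h) := by
  have hcontf : ContinuousOn (fun s => f (c + s * h)) (uIcc 0 1) := by
    rw [uIcc_of_le (by norm_num : (0:ℝ) ≤ 1)]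
    intro s hs
    have hmem : c + s * h ∈ uIcc c (c + h) := by
      rcases le_or_gt 0 h with h0 | h0
      · rw [uIcc_of_le (by linarith)]
        constructor <;> nlinarith [hs.1, hs.2]
      · rw [uIcc_of_ge (by linarith)]
        constructor <;> nlinarith [hs.1, hs.2]
    have h2 : HasDerivAt (fun s : ℝ => c + s * h) h s := by
      simpa using ((hasDerivAt_id s).mul_const h).const_add c
    exact (((hder _ hmem).comp s h2)).continuousAt.continuousWithinAt
  have i1 : IntervalIntegrable (fun s : ℝ => s ^ (θ - 1) * f (c + s * h)) volume 0 1 :=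
    (intervalIntegrable_rpow' (by linarith)).mul_continuousOn hcontf
  have i2 : IntervalIntegrable (fun s : ℝ => s ^ θ * (h * f' (c + s * h))) volume 0 1 :=
    (hint.const_mul h).continuousOn_mul ((Real.continuous_rpow_const hθ.le).continuousOn)
  have key := key_ftc hθ hh hder hint
  rw [intervalIntegral.integral_add (i1.const_mul θ) i2] at key
  rw [intervalIntegral.integral_const_mul] at key
  have e2 : (∫ s in (0:ℝ)..1, s ^ θ * (h * f' (c + s * h)))
      = h * ∫ s in (0:ℝ)..1, s ^ θ * f' (c + s * h) := by
    rw [← intervalIntegral.integral_const_mul]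
    apply intervalIntegral.integral_congr
    intro s _; show s ^ θ * (h * f' (c + s * h)) = h * (s ^ θ * f' (c + s * h)); ring
  rw [e2] at key
  exact key

lemma identity_mid {f f' : ℝ → ℝ} {θ c h : ℝ} (hθ : 0 < θ) (hh : 0 < h)
    (hder : ∀ x ∈ Icc c (c + 2 * h), HasDerivAt f (f' x) x)
    (hintA : IntervalIntegrable (fun s => f' (c + s * h)) volume 0 1)
    (hintB : IntervalIntegrable (fun s => f' (c + 2 * h - s * h)) volume 0 1) :
    f (c + h) - Real.Gamma (θ + 1) * 2 ^ (θ - 1) / ((2 * h) ^ θ) *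
        (rlLeft θ c (c + h) f + rlRight θ (c + h) (c + 2 * h) f)
      = (h / 2) * ((∫ s in (0:ℝ)..1, s ^ θ * f' (c + s * h))
          - ∫ s in (0:ℝ)..1, s ^ θ * f' (c + 2 * h - s * h)) := by
  have hG : Real.Gamma θ > 0 := Real.Gamma_pos_of_pos hθ
  -- FTC left
  have E1 : θ * (∫ s in (0:ℝ)..1, s ^ (θ - 1) * f (c + s * h))
      + h * (∫ s in (0:ℝ)..1, s ^ θ * f' (c + s * h)) = f (c + h) := by
    apply split_ftc hθ hh.ne'
    · intro x hx
      apply hder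
      rw [uIcc_of_le (by linarith)] at hx
      exact ⟨hx.1, by linarith [hx.2]⟩
    · exact hintA
  -- FTC right (with step -h from d := c + 2h)
  have E2 : θ * (∫ s in (0:ℝ)..1, s ^ (θ - 1) * f (c + 2 * h - s * h))
      - h * (∫ s in (0:ℝ)..1, s ^ θ * f' (c + 2 * h - s * h)) = f (c + h) := by
    have key := split_ftc (f := f) (f' := f') (c := c + 2 * h) (h := -h) hθ
      (neg_ne_zero.2 hh.ne')
      (by
        intro x hx
        apply hder
        rw [uIcc_of_ge (by linarith)] at hx
        exact ⟨by linarith [hx.1], by linarith [hx.2]⟩)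
      (by
        have : (fun s : ℝ => f' (c + 2 * h + s * -h)) = fun s => f' (c + 2 * h - s * h) := by
          funext s; ring_nf
        rw [this]; exact hintB)
    have e1 : (fun s : ℝ => s ^ (θ-1) * f (c + 2 * h + s * -h))
        = fun s => s ^ (θ-1) * f (c + 2 * h - s * h) := by funext s; ring_nf
    have e2 : (fun s : ℝ => s ^ θ * f' (c + 2 * h + s * -h))
        = fun s => s ^ θ * f' (c + 2 * h - s * h) := by funext s; ring_nf
    have e3 : c + 2 * h + -h = c + h := by ring
    rw [e1, e2, e3] at key
    linarith [key]
  -- substitution for RL integrals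
  have R1 : rlLeft θ c (c + h) f = (1 / Real.Gamma θ) *
      (h * (h ^ (θ - 1) * ∫ s in (0:ℝ)..1, s ^ (θ - 1) * f (c + s * h))) := by
    rw [rlLeft, subst_left f hh]
  have R2 : rlRight θ (c + h) (c + 2 * h) f = (1 / Real.Gamma θ) *
      (h * (h ^ (θ - 1) * ∫ s in (0:ℝ)..1, s ^ (θ - 1) * f (c + 2 * h - s * h))) := by
    rw [rlRight, (by ring : c + h = (c + 2 * h) - h), subst_right f hh]
  have hGam : Real.Gamma (θ + 1) = θ * Real.Gamma θ := Real.Gamma_add_one hθ.ne'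
  have h2θ : (2 * h) ^ θ = (2 * 2 ^ (θ - 1)) * (h ^ (θ - 1) * h) := by
    rw [Real.mul_rpow (by norm_num) hh.le]
    have a1 : (2:ℝ) ^ (θ - 1) = 2 ^ θ / 2 := by
      rw [Real.rpow_sub (by norm_num), Real.rpow_one]
    have a2 : h ^ (θ - 1) = h ^ θ / h := by
      rw [Real.rpow_sub hh, Real.rpow_one]
    rw [a1, a2]; field_simp
  have hpow2 : (0:ℝ) < 2 ^ (θ - 1) := Real.rpow_pos_of_pos (by norm_num) _
  have hpowh : (0:ℝ) < h ^ (θ - 1) := Real.rpow_pos_of_pos hh _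
  rw [R1, R2, hGam, h2θ]
  field_simp
  simp only [mul_comm _ h] at E1 E2
  linear_combination -E1 - E2

lemma holder_bound {g : ℝ → ℝ} {θ α q m X Y : ℝ} (hθ : 0 < θ) (hα0 : 0 ≤ α)
    (hq : 1 ≤ q) (hm0 : 0 ≤ m) (hX : 0 ≤ X) (hY : 0 ≤ Y)
    (hgi : IntervalIntegrable g volume 0 1)
    (hptw : ∀ s ∈ Icc (0:ℝ) 1, |g s| ^ q ≤ s ^ α * X + m * (1 - s ^ α) * Y) :
    |∫ s in (0:ℝ)..1, s ^ θ * g s|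
      ≤ (1 / (θ + 1)) * (1 / (α + θ + 1)) ^ (1 / q) * ((θ + 1) * X + α * m * Y) ^ (1 / q) := by
  have hq0 : 0 < q := lt_of_lt_of_le one_pos hq
  have hT : (0:ℝ) < θ + 1 := by linarith
  have hA : (0:ℝ) < α + θ + 1 := by linarith
  have contpow : ContinuousOn (fun s : ℝ => s ^ θ) (uIcc (0:ℝ) 1) :=
    (Real.continuous_rpow_const hθ.le).continuousOn
  -- |g|^q is interval integrable
  have hgqi : IntervalIntegrable (fun s => |g s| ^ q) volume 0 1 := by
    have hcont : Continuous (fun x : ℝ => |x| ^ q) :=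
      continuous_abs.rpow_const (fun x => Or.inr hq0.le)
    constructor
    · have hmeas : AEStronglyMeasurable (fun s => |g s| ^ q)
          (volume.restrict (Ioc (0:ℝ) 1)) :=
        hcont.comp_aestronglyMeasurable hgi.1.aestronglyMeasurable
      refine Integrable.mono' (integrable_const (X + m * Y)) hmeas ?_
      rw [ae_restrict_iff' measurableSet_Ioc]
      filter_upwards with s hs
      have hs' : s ∈ Icc (0:ℝ) 1 := ⟨hs.1.le, hs.2⟩
      have h1 : s ^ α ≤ 1 := Real.rpow_le_one hs'.1 hs'.2 hα0
      have h2 : (0:ℝ) ≤ s ^ α := Real.rpow_nonneg hs'.1 α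
      have := hptw s hs'
      rw [Real.norm_eq_abs, abs_of_nonneg (Real.rpow_nonneg (abs_nonneg _) q)]
      have b1 : s ^ α * X ≤ X := by nlinarith
      have b2 : m * (1 - s ^ α) * Y ≤ m * Y := by
        have : m * ((1 - s ^ α) * Y) ≤ m * (1 * Y) :=
          mul_le_mul_of_nonneg_left (mul_le_mul_of_nonneg_right (by linarith) hY) hm0
        nlinarith [this]
      linarith
    · simp [Ioc_eq_empty (by norm_num : ¬ (1:ℝ) < 0)]
  -- step A : abs into integral
  have iA : IntervalIntegrable (fun s => s ^ θ * g s) volume 0 1 :=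
    hgi.continuousOn_mul contpow
  have stepA : |∫ s in (0:ℝ)..1, s ^ θ * g s| ≤ ∫ s in (0:ℝ)..1, s ^ θ * |g s| := by
    refine le_trans (intervalIntegral.abs_integral_le_integral_abs (by norm_num)) (le_of_eq ?_)
    apply intervalIntegral.integral_congr
    intro s hs
    rw [uIcc_of_le (by norm_num : (0:ℝ) ≤ 1)] at hs
    show |s ^ θ * g s| = s ^ θ * |g s|
    rw [abs_mul, abs_of_nonneg (Real.rpow_nonneg hs.1 θ)]
  -- step C : bound on ∫ s^θ |g|^q
  have iq : IntervalIntegrable (fun s => s ^ θ * |g s| ^ q) volume 0 1 :=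
    hgqi.continuousOn_mul contpow
  have iR : IntervalIntegrable (fun s : ℝ => s ^ θ * (s ^ α * X + m * (1 - s ^ α) * Y))
      volume 0 1 := by
    apply Continuous.intervalIntegrable
    have c1 : Continuous (fun s : ℝ => s ^ θ) := Real.continuous_rpow_const hθ.le
    have c2 : Continuous (fun s : ℝ => s ^ α) := Real.continuous_rpow_const hα0
    continuity
  have stepC1 : (∫ s in (0:ℝ)..1, s ^ θ * |g s| ^ q)
      ≤ ∫ s in (0:ℝ)..1, s ^ θ * (s ^ α * X + m * (1 - s ^ α) * Y) := by
    apply intervalIntegral.integral_mono_on (by norm_num) iq iR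
    intro s hs
    exact mul_le_mul_of_nonneg_left (hptw s hs) (Real.rpow_nonneg hs.1 θ)
  have ival : (∫ s in (0:ℝ)..1, s ^ θ * (s ^ α * X + m * (1 - s ^ α) * Y))
      = (1 / (θ + 1)) * (1 / (α + θ + 1)) * ((θ + 1) * X + α * m * Y) := by
    have congr1 : (∫ s in (0:ℝ)..1, s ^ θ * (s ^ α * X + m * (1 - s ^ α) * Y))
        = ∫ s in (0:ℝ)..1, (X - m * Y) * s ^ (θ + α) + m * Y * s ^ θ := by
      apply intervalIntegral.integral_congr
      intro s hs
      rw [uIcc_of_le (by norm_num : (0:ℝ) ≤ 1)] at hs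
      show s ^ θ * (s ^ α * X + m * (1 - s ^ α) * Y)
          = (X - m * Y) * s ^ (θ + α) + m * Y * s ^ θ
      rw [Real.rpow_add' hs.1 (by positivity)]
      ring
    rw [congr1]
    rw [intervalIntegral.integral_add
      ((intervalIntegrable_rpow' (by linarith)).const_mul _)
      ((intervalIntegrable_rpow' (by linarith)).const_mul _),
      intervalIntegral.integral_const_mul, intervalIntegral.integral_const_mul,
      integral_rpow (Or.inl (by linarith)), integral_rpow (Or.inl (by linarith)),
      Real.one_rpow, Real.one_rpow, Real.zero_rpow (by positivity), Real.zero_rpow (by positivity)]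
    field_simp
    ring
  -- step D : Hölder / power mean
  have ipow : (∫ s in (0:ℝ)..1, s ^ θ) = 1 / (θ + 1) := by
    rw [integral_rpow (Or.inl (by linarith)), Real.one_rpow,
      Real.zero_rpow (by positivity)]
    norm_num
  have hgb : ∀ s ∈ Icc (0:ℝ) 1, |g s| ≤ (X + m * Y) ^ (1 / q) := by
    intro s hs
    have h1 : s ^ α ≤ 1 := Real.rpow_le_one hs.1 hs.2 hα0
    have h2 : (0:ℝ) ≤ s ^ α := Real.rpow_nonneg hs.1 α
    have hb : |g s| ^ q ≤ X + m * Y := by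
      have b1 : s ^ α * X ≤ X := by nlinarith
      have b2 : m * (1 - s ^ α) * Y ≤ m * Y := by
        have : m * ((1 - s ^ α) * Y) ≤ m * (1 * Y) :=
          mul_le_mul_of_nonneg_left (mul_le_mul_of_nonneg_right (by linarith) hY) hm0
        nlinarith [this]
      linarith [hptw s hs]
    have := Real.rpow_le_rpow (Real.rpow_nonneg (abs_nonneg _) q) hb (by positivity : (0:ℝ) ≤ 1/q)
    rwa [← Real.rpow_mul (abs_nonneg _), mul_one_div_cancel hq0.ne', Real.rpow_one] at this
  have stepD : (∫ s in (0:ℝ)..1, s ^ θ * |g s|)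
      ≤ (1 / (θ + 1)) ^ (1 - 1 / q) * (∫ s in (0:ℝ)..1, s ^ θ * |g s| ^ q) ^ (1 / q) := by
    rcases eq_or_lt_of_le hq with hq1 | hq1
    · rw [← hq1]
      simp [Real.rpow_one]
    · set p : ℝ := q / (q - 1) with hp_def
      have hpq : p.HolderConjugate q := (Real.HolderConjugate.conjExponent hq1).symm
      have hp0 : 0 < p := hpq.pos
      have hpinv : 1 / p = 1 - 1 / q := by
        have := hpq.inv_add_inv_eq_one
        rw [one_div, one_div]; linarith
      set μ : Measure ℝ := volume.restrict (Ioc (0:ℝ) 1) with hμ_def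
      haveI : IsFiniteMeasure μ := ⟨by
        rw [hμ_def, Measure.restrict_apply_univ, Real.volume_Ioc]
        exact ENNReal.ofReal_lt_top⟩
      set F : ℝ → ℝ := fun s => s ^ (θ / p) with hF_def
      set G : ℝ → ℝ := fun s => s ^ (θ / q) * |g s| with hG_def
      have hFnn : 0 ≤ᵐ[μ] F := by
        rw [hμ_def, Filter.EventuallyLE, ae_restrict_iff' measurableSet_Ioc]
        filter_upwards with s hs
        exact Real.rpow_nonneg hs.1.le _
      have hGnn : 0 ≤ᵐ[μ] G := by
        rw [hμ_def, Filter.EventuallyLE, ae_restrict_iff' measurableSet_Ioc]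
        filter_upwards with s hs
        exact mul_nonneg (Real.rpow_nonneg hs.1.le _) (abs_nonneg _)
      have memF : MemLp F (ENNReal.ofReal p) μ := by
        apply MemLp.of_bound
          ((Real.continuous_rpow_const (by positivity)).aestronglyMeasurable) 1
        rw [hμ_def, ae_restrict_iff' measurableSet_Ioc]
        filter_upwards with s hs
        rw [Real.norm_eq_abs, abs_of_nonneg (Real.rpow_nonneg hs.1.le _)]
        exact Real.rpow_le_one hs.1.le hs.2 (by positivity)
      have memG : MemLp G (ENNReal.ofReal q) μ := by
        have hmeasG : AEStronglyMeasurable G μ := by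
          apply AEStronglyMeasurable.mul
            ((Real.continuous_rpow_const (by positivity)).aestronglyMeasurable)
          simpa [Real.norm_eq_abs] using hgi.1.aestronglyMeasurable.norm
        apply MemLp.of_bound hmeasG ((X + m * Y) ^ (1 / q))
        rw [hμ_def, ae_restrict_iff' measurableSet_Ioc]
        filter_upwards with s hs
        have h1 : s ^ (θ / q) ≤ 1 := Real.rpow_le_one hs.1.le hs.2 (by positivity)
        have h2 : (0:ℝ) ≤ s ^ (θ / q) := Real.rpow_nonneg hs.1.le _
        have h3 := hgb s ⟨hs.1.le, hs.2⟩
        show ‖s ^ (θ / q) * |g s|‖ ≤ (X + m * Y) ^ (1 / q)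
        rw [Real.norm_eq_abs, abs_of_nonneg (mul_nonneg h2 (abs_nonneg _))]
        calc s ^ (θ / q) * |g s| ≤ 1 * ((X + m * Y) ^ (1 / q)) :=
              mul_le_mul h1 h3 (abs_nonneg _) (by norm_num)
          _ = (X + m * Y) ^ (1 / q) := one_mul _
      have holder := MeasureTheory.integral_mul_le_Lp_mul_Lq_of_nonneg hpq hFnn hGnn memF memG
      have e0 : (∫ s, F s * G s ∂μ) = ∫ s in (0:ℝ)..1, s ^ θ * |g s| := by
        rw [intervalIntegral.integral_of_le (by norm_num : (0:ℝ) ≤ 1), hμ_def]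
        apply setIntegral_congr_fun measurableSet_Ioc
        intro s hs
        have hθsum : θ / p + θ / q = θ := by
          rw [div_eq_mul_inv, div_eq_mul_inv, ← mul_add, hpq.inv_add_inv_eq_one, mul_one]
        show s ^ (θ / p) * (s ^ (θ / q) * |g s|) = s ^ θ * |g s|
        rw [← mul_assoc, ← Real.rpow_add hs.1, hθsum]
      have e1 : (∫ s, F s ^ p ∂μ) = 1 / (θ + 1) := by
        rw [← ipow, intervalIntegral.integral_of_le (by norm_num : (0:ℝ) ≤ 1), hμ_def]
        apply setIntegral_congr_fun measurableSet_Ioc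
        intro s hs
        show (s ^ (θ / p)) ^ p = s ^ θ
        rw [← Real.rpow_mul hs.1.le, div_mul_cancel₀ θ hp0.ne']
      have e2 : (∫ s, G s ^ q ∂μ) = ∫ s in (0:ℝ)..1, s ^ θ * |g s| ^ q := by
        rw [intervalIntegral.integral_of_le (by norm_num : (0:ℝ) ≤ 1), hμ_def]
        apply setIntegral_congr_fun measurableSet_Ioc
        intro s hs
        show (s ^ (θ / q) * |g s|) ^ q = s ^ θ * |g s| ^ q
        rw [Real.mul_rpow (Real.rpow_nonneg hs.1.le _) (abs_nonneg _),
          ← Real.rpow_mul hs.1.le, div_mul_cancel₀ θ hq0.ne']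
      rw [e0, e1, e2, hpinv] at holder
      exact holder
  -- combine
  have intq_nonneg : (0:ℝ) ≤ ∫ s in (0:ℝ)..1, s ^ θ * |g s| ^ q := by
    apply intervalIntegral.integral_nonneg (by norm_num)
    intro s hs
    exact mul_nonneg (Real.rpow_nonneg hs.1 _) (Real.rpow_nonneg (abs_nonneg _) _)
  have stepE : (∫ s in (0:ℝ)..1, s ^ θ * |g s| ^ q) ^ (1 / q)
      ≤ ((1 / (θ + 1)) * (1 / (α + θ + 1)) * ((θ + 1) * X + α * m * Y)) ^ (1 / q) := by
    apply Real.rpow_le_rpow intq_nonneg (by rw [← ival]; exact stepC1) (by positivity)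
  have hW : (0:ℝ) ≤ (θ + 1) * X + α * m * Y := by positivity
  calc |∫ s in (0:ℝ)..1, s ^ θ * g s|
      ≤ ∫ s in (0:ℝ)..1, s ^ θ * |g s| := stepA
    _ ≤ (1 / (θ + 1)) ^ (1 - 1 / q) * (∫ s in (0:ℝ)..1, s ^ θ * |g s| ^ q) ^ (1 / q) := stepD
    _ ≤ (1 / (θ + 1)) ^ (1 - 1 / q) *
          ((1 / (θ + 1)) * (1 / (α + θ + 1)) * ((θ + 1) * X + α * m * Y)) ^ (1 / q) := by
        apply mul_le_mul_of_nonneg_left stepE (by positivity)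
    _ = (1 / (θ + 1)) * (1 / (α + θ + 1)) ^ (1 / q) * ((θ + 1) * X + α * m * Y) ^ (1 / q) := by
        rw [Real.mul_rpow (by positivity) hW, Real.mul_rpow (by positivity) (by positivity)]
        have : (1 / (θ + 1)) ^ (1 - 1 / q) * (1 / (θ + 1)) ^ (1 / q) = 1 / (θ + 1) := by
          rw [← Real.rpow_add (by positivity)]
          norm_num
        calc (1 / (θ + 1)) ^ (1 - 1 / q) *
              ((1 / (θ + 1)) ^ (1/q) * (1 / (α + θ + 1)) ^ (1/q) * ((θ + 1) * X + α * m * Y) ^ (1/q))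
            = ((1 / (θ + 1)) ^ (1 - 1 / q) * (1 / (θ + 1)) ^ (1 / q)) *
              ((1 / (α + θ + 1)) ^ (1/q) * ((θ + 1) * X + α * m * Y) ^ (1/q)) := by ring
          _ = _ := by rw [this]; ring

set_option maxHeartbeats 1000000 in
theorem midpoint_powmean
    (I : Set ℝ) (hI : Set.OrdConnected I) (hI0 : I ⊆ Set.Ici (0:ℝ)) (f f' : ℝ → ℝ) (m a b : ℝ)
    (hm : m ∈ Set.Ioc (0:ℝ) 1) (hab : a < b)
    (hma : m * a ∈ interior I) (hb : b ∈ interior I)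
    (hf : ∀ y ∈ interior I, HasDerivAt f (f' y) y)
    (hint : IntervalIntegrable f' MeasureTheory.volume (m * a) (m * b))
    (α q : ℝ) (hα : α ∈ Set.Icc (0:ℝ) 1) (hq : 1 ≤ q)
    (hconv : AlphaMConvexOn α m (m * a) b (fun u => |f' u| ^ q)) :
    ∀ θ : ℝ, 0 < θ →
      |f (m * (a + b) / 2) -
          Real.Gamma (θ + 1) * 2 ^ (θ - 1) / (m ^ θ * (b - a) ^ θ) *
            (rlLeft θ (m * a) (m * (a + b) / 2) f + rlRight θ (m * (a + b) / 2) (m * b) f)| ≤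
        m * (b - a) / 4 * (1 / (θ + 1)) * (1 / (α + θ + 1)) ^ (1 / q) *
          (((θ + 1) * |f' (m * (a + b) / 2)| ^ q + α * m * |f' a| ^ q) ^ (1 / q) +
            ((θ + 1) * |f' (m * (a + b) / 2)| ^ q + α * m * |f' b| ^ q) ^ (1 / q)) := by
  intro θ hθ
  obtain ⟨hm0, hm1⟩ := hm
  obtain ⟨hα0, hα1⟩ := hα
  obtain ⟨h, hh_def⟩ : ∃ h : ℝ, h = m * (b - a) / 2 := ⟨_, rfl⟩
  have hh : 0 < h := by rw [hh_def]; nlinarith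
  have ha0 : 0 ≤ a := by
    have h1 : m * a ∈ I := interior_subset hma
    have h2 : (0:ℝ) ≤ m * a := hI0 h1
    nlinarith
  have hca : m * a ≤ a := by nlinarith
  have hub : m * (a + b) / 2 ≤ b := by nlinarith
  have hdb : m * b ≤ b := by nlinarith
  have hcu : m * a ≤ m * (a + b) / 2 := by nlinarith
  have e_u : m * a + h = m * (a + b) / 2 := by rw [hh_def]; ring
  have e_d : m * a + 2 * h = m * b := by rw [hh_def]; ring
  have hIcc : Icc (m * a) b ⊆ interior I := hI.interior.out hma hb
  have hder : ∀ x ∈ Icc (m * a) b, HasDerivAt f (f' x) x := fun x hx => hf x (hIcc hx)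
  -- integrability of the two composed integrands
  have hintA : IntervalIntegrable (fun s => f' (m * a + s * h)) volume 0 1 := by
    apply comp_affine_integrable hh.ne'
    apply hint.mono_set
    rw [uIcc_of_le (by linarith), uIcc_of_le (by nlinarith)]
    exact Icc_subset_Icc le_rfl (by nlinarith)
  have hintB : IntervalIntegrable (fun s => f' (m * a + 2 * h - s * h)) volume 0 1 := by
    have base : IntervalIntegrable f' volume (m * a + 2 * h) (m * a + 2 * h + -h) := by
      apply hint.mono_set
      rw [uIcc_of_ge (by linarith), uIcc_of_le (by nlinarith)]
      refine Icc_subset_Icc (by nlinarith) (by linarith [e_d])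
    have := comp_affine_integrable (neg_ne_zero.2 hh.ne') base
    have e : (fun s : ℝ => f' (m * a + 2 * h + s * -h))
        = fun s : ℝ => f' (m * a + 2 * h - s * h) := by
      funext s; ring_nf
    rwa [e] at this
  -- the identity
  have ID := identity_mid (f := f) (f' := f') hθ hh
    (by
      intro x hx
      apply hder
      exact ⟨hx.1, by linarith [hx.2, e_d, hdb]⟩)
    hintA hintB
  -- pointwise convexity bounds
  obtain ⟨X, hX_def⟩ : ∃ X : ℝ, X = |f' (m * (a + b) / 2)| ^ q := ⟨_, rfl⟩
  obtain ⟨Ya, hYa_def⟩ : ∃ Ya : ℝ, Ya = |f' a| ^ q := ⟨_, rfl⟩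
  obtain ⟨Yb, hYb_def⟩ : ∃ Yb : ℝ, Yb = |f' b| ^ q := ⟨_, rfl⟩
  have hXnn : 0 ≤ X := hX_def ▸ Real.rpow_nonneg (abs_nonneg _) q
  have hYann : 0 ≤ Ya := hYa_def ▸ Real.rpow_nonneg (abs_nonneg _) q
  have hYbnn : 0 ≤ Yb := hYb_def ▸ Real.rpow_nonneg (abs_nonneg _) q
  have humem : m * (a + b) / 2 ∈ Icc (m * a) b := Set.mem_Icc.mpr ⟨hcu, hub⟩
  have hptwA : ∀ s ∈ Icc (0:ℝ) 1,
      |(fun s => f' (m * a + s * h)) s| ^ q ≤ s ^ α * X + m * (1 - s ^ α) * Ya := by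
    intro s hs
    have key := hconv (m * (a + b) / 2) humem a (Set.mem_Icc.mpr ⟨hca, hab.le⟩) s hs
      (by
        have e : s * (m * (a + b) / 2) + m * (1 - s) * a = m * a + s * h := by
          rw [hh_def]; ring
        rw [e, Set.mem_Icc]
        refine ⟨by nlinarith [hs.1, hh], by nlinarith [hs.1, hs.2, hh, e_u, hub]⟩)
    have e : s * (m * (a + b) / 2) + m * (1 - s) * a = m * a + s * h := by
      rw [hh_def]; ring
    rw [e] at key
    rw [hX_def, hYa_def]
    exact key
  have hptwB : ∀ s ∈ Icc (0:ℝ) 1,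
      |(fun s => f' (m * a + 2 * h - s * h)) s| ^ q ≤ s ^ α * X + m * (1 - s ^ α) * Yb := by
    intro s hs
    have key := hconv (m * (a + b) / 2) humem b (Set.mem_Icc.mpr ⟨by linarith, le_rfl⟩) s hs
      (by
        have e : s * (m * (a + b) / 2) + m * (1 - s) * b = m * a + 2 * h - s * h := by
          rw [hh_def]; ring
        rw [e, Set.mem_Icc]
        refine ⟨by nlinarith [hs.1, hs.2, hh, hcu, e_d], by nlinarith [hs.1, hh, e_d, hdb]⟩)
    have e : s * (m * (a + b) / 2) + m * (1 - s) * b = m * a + 2 * h - s * h := by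
      rw [hh_def]; ring
    rw [e] at key
    rw [hX_def, hYb_def]
    exact key
  have boundA := holder_bound hθ hα0 hq hm0.le hXnn hYann hintA hptwA
  have boundB := holder_bound hθ hα0 hq hm0.le hXnn hYbnn hintB hptwB
  -- assemble
  have e_den : m ^ θ * (b - a) ^ θ = (2 * h) ^ θ := by
    rw [← Real.mul_rpow hm0.le (by linarith)]
    congr 1
    rw [hh_def]; ring
  rw [← e_u, (show m * b = m * a + 2 * h from e_d.symm), e_den, ID]
  obtain ⟨SA, hSA_def⟩ : ∃ S : ℝ, S = ∫ s in (0:ℝ)..1, s ^ θ * f' (m * a + s * h) := ⟨_, rfl⟩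
  obtain ⟨SB, hSB_def⟩ : ∃ S : ℝ, S = ∫ s in (0:ℝ)..1, s ^ θ * f' (m * a + 2 * h - s * h) := ⟨_, rfl⟩
  rw [← hSA_def, ← hSB_def]
  rw [← hSA_def] at boundA
  rw [← hSB_def] at boundB
  have tri : |h / 2 * (SA - SB)| ≤ (h / 2) * (|SA| + |SB|) := by
    rw [abs_mul, abs_of_nonneg (by linarith : (0:ℝ) ≤ h / 2)]
    exact mul_le_mul_of_nonneg_left (abs_sub SA SB) (by linarith)
  refine le_trans tri ?_
  have sum_le : |SA| + |SB| ≤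
      (1 / (θ + 1)) * (1 / (α + θ + 1)) ^ (1 / q) * ((θ + 1) * X + α * m * Ya) ^ (1 / q)
      + (1 / (θ + 1)) * (1 / (α + θ + 1)) ^ (1 / q) * ((θ + 1) * X + α * m * Yb) ^ (1 / q) :=
    add_le_add boundA boundB
  have hfac : (0:ℝ) ≤ h / 2 := by linarith
  calc (h / 2) * (|SA| + |SB|)
      ≤ (h / 2) * ((1 / (θ + 1)) * (1 / (α + θ + 1)) ^ (1 / q) * ((θ + 1) * X + α * m * Ya) ^ (1 / q)
        + (1 / (θ + 1)) * (1 / (α + θ + 1)) ^ (1 / q) * ((θ + 1) * X + α * m * Yb) ^ (1 / q)) :=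
        mul_le_mul_of_nonneg_left sum_le hfac
    _ = m * (b - a) / 4 * (1 / (θ + 1)) * (1 / (α + θ + 1)) ^ (1 / q) *
          (((θ + 1) * |f' (m * a + h)| ^ q + α * m * |f' a| ^ q) ^ (1 / q) +
            ((θ + 1) * |f' (m * a + h)| ^ q + α * m * |f' b| ^ q) ^ (1 / q)) := by
        rw [hX_def, hYa_def, hYb_def, e_u, hh_def]; ring
end
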